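/- arXiv:2012.12328 — 3 statements merged into one kernel-verified Lean document; each statement's English description precedes it below -/
import Mathlib

section
/- Let K be a field, n ≥ 2, t ∈ K nonzero, and E = I_{2n} + t·e_{1,n+1} a long root element of Sp_{2n}(K). Then the conjugation word norm diameter of Sp_{2n}(K) with respect to the single normally generating element E satisfies ‖Sp_{2n}(K)‖_E ≥ 2n. -/
open Matrix

/-- The standard symplectic form matrix `J = [[0, Iₙ], [-Iₙ, 0]]`. -/
def Jmat (n : ℕ) (R : Type*) [CommRing R] :
    Matrix (Fin n ⊕ Fin n) (Fin n ⊕ Fin n) R :=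
  fromBlocks 0 1 (-1) 0

/-- `A ∈ Sp_{2n}(R)`, i.e. `AᵀJA = J`. -/
def IsSymp {n : ℕ} {R : Type*} [CommRing R]
    (A : Matrix (Fin n ⊕ Fin n) (Fin n ⊕ Fin n) R) : Prop :=
  Aᵀ * Jmat n R * A = Jmat n R

section Aux

variable {K : Type*} [Field K] {m : Type*} [Fintype m] [DecidableEq m]

lemma myrank_add_le (A B : Matrix m m K) : (A + B).rank ≤ A.rank + B.rank := by
  unfold Matrix.rank
  rw [Matrix.mulVecLin_add]
  have hle : LinearMap.range (A.mulVecLin + B.mulVecLin) ≤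
      LinearMap.range A.mulVecLin ⊔ LinearMap.range B.mulVecLin := by
    rintro x ⟨v, rfl⟩
    exact Submodule.add_mem_sup ⟨v, rfl⟩ ⟨v, rfl⟩
  refine le_trans (Submodule.finrank_mono hle) ?_
  exact Submodule.finrank_add_le_finrank_add_finrank _ _

lemma myrank_std (i j : m) (c : K) : (single i j c).rank ≤ 1 := by
  have h : single i j c =
      (Matrix.of fun a (_ : Fin 1) => if a = i then c else 0) *
      (Matrix.of fun (_ : Fin 1) b => if b = j then (1 : K) else 0) := by
    ext a b
    simp [Matrix.mul_apply, single, Matrix.of_apply]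
    aesop
  rw [h]
  exact le_trans (Matrix.rank_mul_le_left _ _) (le_trans (Matrix.rank_le_card_width _) (by simp))

lemma myrank_prod (L : List (Matrix m m K)) (h : ∀ M ∈ L, (M - 1).rank ≤ 1) :
    (L.prod - 1).rank ≤ L.length := by
  induction L with
  | nil => simp
  | cons M L ih =>
    have h1 : (M - 1).rank ≤ 1 := h M (by simp)
    have h2 : (L.prod - 1).rank ≤ L.length := ih fun N hN => h N (by simp [hN])
    have key : M * L.prod - 1 = M * (L.prod - 1) + (M - 1) := by noncomm_ring
    calc ((M :: L).prod - 1).rank = (M * (L.prod - 1) + (M - 1)).rank := by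
          rw [List.prod_cons, key]
      _ ≤ (M * (L.prod - 1)).rank + (M - 1).rank := myrank_add_le _ _
      _ ≤ (L.prod - 1).rank + 1 := add_le_add (Matrix.rank_mul_le_right _ _) h1
      _ ≤ L.length + 1 := by omega
      _ = (M :: L).length := by simp

end Aux

/-- The conjugation word norm of `Sp_{2n}(K)` with respect to the long root element
`E = I + t·e_{1,n+1}` has diameter at least `2n`: not every symplectic matrix is a product
of at most `2n − 1` symplectic conjugates of `E` and `E⁻¹`. -/
theorem stmt6 {K : Type*} [Field K] {n : ℕ} (hn : 2 ≤ n) (t : K) (ht : t ≠ 0)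
    (E : Matrix (Fin n ⊕ Fin n) (Fin n ⊕ Fin n) K)
    (hE : E = 1 + single (Sum.inl (⟨0, by omega⟩ : Fin n))
        (Sum.inr (⟨0, by omega⟩ : Fin n)) t) :
    ¬ ∀ A : Matrix (Fin n ⊕ Fin n) (Fin n ⊕ Fin n) K, IsSymp A →
      ∃ L : List (Matrix (Fin n ⊕ Fin n) (Fin n ⊕ Fin n) K),
        (∀ M ∈ L, ∃ g, IsSymp g ∧ (M = g * E * g⁻¹ ∨ M = g * E⁻¹ * g⁻¹)) ∧
        L.length ≤ 2 * n - 1 ∧ A = L.prod := by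
  intro hyp
  set i : Fin n ⊕ Fin n := Sum.inl ⟨0, by omega⟩ with hi
  set j : Fin n ⊕ Fin n := Sum.inr ⟨0, by omega⟩ with hj
  set e := single i j t with he
  have hee : e * e = 0 := by
    rw [he]
    exact Matrix.single_mul_single_of_ne (i := i) (j := j) (k := i) (c := t) (h := by simp [hi, hj]) (d := t)
  have hEinv : E⁻¹ = 1 - e := by
    apply Matrix.inv_eq_right_inv
    rw [hE, add_mul, mul_sub, mul_sub]
    simp [hee]
  -- the determinant of J is a unit
  have hJJ : Jmat n K * (-(Jmat n K)) = 1 := by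
    unfold Jmat
    rw [mul_neg, Matrix.fromBlocks_multiply]
    simp
    rw [← Matrix.fromBlocks_one]
    simp [Matrix.fromBlocks_neg]
  have hJdet : (Jmat n K).det ≠ 0 := by
    have : (Jmat n K).det * (-(Jmat n K)).det = 1 := by rw [← Matrix.det_mul, hJJ, Matrix.det_one]
    intro h0
    rw [h0, zero_mul] at this
    exact zero_ne_one this
  -- symplectic matrices are invertible
  have hsymp_unit : ∀ g : Matrix (Fin n ⊕ Fin n) (Fin n ⊕ Fin n) K, IsSymp g →
      IsUnit g.det := by
    intro g hg
    have hdet := congrArg Matrix.det hg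
    rw [Matrix.det_mul, Matrix.det_mul, Matrix.det_transpose] at hdet
    have h2 : g.det * g.det = 1 := by
      have : (Jmat n K).det * (g.det * g.det) = (Jmat n K).det * 1 := by
        rw [mul_one]; linear_combination hdet
      exact mul_left_cancel₀ hJdet this
    exact IsUnit.of_mul_eq_one _ h2
  -- each factor has rank (M - 1) ≤ 1
  have hrank1 : ∀ M : Matrix (Fin n ⊕ Fin n) (Fin n ⊕ Fin n) K,
      (∃ g, IsSymp g ∧ (M = g * E * g⁻¹ ∨ M = g * E⁻¹ * g⁻¹)) → (M - 1).rank ≤ 1 := by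
    rintro M ⟨g, hg, hM⟩
    have hgu := hsymp_unit g hg
    have hginv : g * g⁻¹ = 1 := Matrix.mul_nonsing_inv g hgu
    have key : ∀ c : K, (g * (1 + single i j c) * g⁻¹ - 1).rank ≤ 1 := by
      intro c
      have : g * (1 + single i j c) * g⁻¹ - 1
          = g * (single i j c * g⁻¹) := by
        rw [mul_add, mul_one, add_mul, hginv, mul_assoc]
        abel
      rw [this]
      exact le_trans (Matrix.rank_mul_le_right _ _)
        (le_trans (Matrix.rank_mul_le_left _ _) (myrank_std i j c))
    rcases hM with rfl | rfl
    · have : E = 1 + single i j t := hE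
      rw [this]; exact key t
    · have : E⁻¹ = 1 + single i j (-t) := by
        rw [hEinv, he, sub_eq_add_neg]
        congr 1
        ext a b
        simp only [single, Matrix.neg_apply, Matrix.of_apply]
        split <;> simp
      rw [this]; exact key (-t)
  -- the bad symplectic matrix
  set A : Matrix (Fin n ⊕ Fin n) (Fin n ⊕ Fin n) K := fromBlocks 0 1 (-1) 1 with hA
  have hAsymp : IsSymp A := by
    show Aᵀ * Jmat n K * A = Jmat n K
    rw [hA]
    unfold Jmat
    rw [Matrix.fromBlocks_transpose, Matrix.fromBlocks_multiply, Matrix.fromBlocks_multiply]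
    simp
  have hA1 : A - 1 = fromBlocks (-1) 1 (-1) 0 := by
    rw [hA, ← Matrix.fromBlocks_one, sub_eq_add_neg, Matrix.fromBlocks_neg,
      Matrix.fromBlocks_add]
    simp
  have hU : IsUnit (A - 1) := by
    rw [hA1]
    have h1 : (fromBlocks (-1) 1 (-1) 0 : Matrix (Fin n ⊕ Fin n) (Fin n ⊕ Fin n) K) *
        fromBlocks 0 (-1) 1 (-1) = 1 := by
      rw [Matrix.fromBlocks_multiply, ← Matrix.fromBlocks_one]
      simp
    have h2 : (fromBlocks 0 (-1) 1 (-1) : Matrix (Fin n ⊕ Fin n) (Fin n ⊕ Fin n) K) *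
        fromBlocks (-1) 1 (-1) 0 = 1 := by
      rw [Matrix.fromBlocks_multiply, ← Matrix.fromBlocks_one]
      simp
    exact ⟨⟨_, _, h1, h2⟩, rfl⟩
  have hrankA : (A - 1).rank = 2 * n := by
    rw [Matrix.rank_of_isUnit _ hU]
    simp [Fintype.card_sum]
    omega
  obtain ⟨L, hL1, hL2, hL3⟩ := hyp A hAsymp
  have hbound : (A - 1).rank ≤ L.length := by
    rw [hL3]
    exact myrank_prod L fun M hM => hrank1 M (hL1 M hM)
  omega
end

section
/- Let R be a principal ideal domain and let A ∈ Sp_{2n}(R) with n ≥ 3. Then there exists B ∈ Sp_{2n}(R) such that A' = B⁻¹AB has upper-Hessenberg-like form in its first n×n block: a'_{i,1} = 0 for 3 ≤ i ≤ n, and more generally a'_{i,j} = 0 for 2 ≤ j+1 < i ≤ n; moreover a'_{1,1} = a_{1,1} and a'_{2,1} = gcd(a_{2,1}, a_{3,1}, …, a_{n,1}) up to multiplication by a unit of R. -/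
open Matrix

namespace Stmt8aux
variable {R : Type*} [CommRing R]

/-- extend a matrix by identity in the (0,0) corner -/
def ext1 {m : ℕ} (Q : Matrix (Fin m) (Fin m) R) : Matrix (Fin (m+1)) (Fin (m+1)) R :=
  Matrix.of (Fin.cons (Fin.cons 1 0) (fun i => Fin.cons 0 (Q i)))

@[simp] lemma ext1_00 {m : ℕ} (Q : Matrix (Fin m) (Fin m) R) : ext1 Q 0 0 = 1 := rfl
@[simp] lemma ext1_0s {m : ℕ} (Q : Matrix (Fin m) (Fin m) R) (j : Fin m) :
    ext1 Q 0 j.succ = 0 := by simp [ext1]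
@[simp] lemma ext1_s0 {m : ℕ} (Q : Matrix (Fin m) (Fin m) R) (i : Fin m) :
    ext1 Q i.succ 0 = 0 := by simp [ext1]
@[simp] lemma ext1_ss {m : ℕ} (Q : Matrix (Fin m) (Fin m) R) (i j : Fin m) :
    ext1 Q i.succ j.succ = Q i j := by simp [ext1]

lemma ext1_mul {m : ℕ} (Q Q' : Matrix (Fin m) (Fin m) R) :
    ext1 Q * ext1 Q' = ext1 (Q * Q') := by
  ext i j
  refine Fin.cases ?_ (fun i => ?_) i <;> refine Fin.cases ?_ (fun j => ?_) j <;>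
    simp [Matrix.mul_apply, Fin.sum_univ_succ]

lemma ext1_one {m : ℕ} : (ext1 (1 : Matrix (Fin m) (Fin m) R)) = 1 := by
  ext i j
  refine Fin.cases ?_ (fun i => ?_) i <;> refine Fin.cases ?_ (fun j => ?_) j <;>
    simp [Matrix.one_apply, Fin.succ_inj, Fin.succ_ne_zero, (Fin.succ_ne_zero _).symm]

lemma ext1_mulVec {m : ℕ} (Q : Matrix (Fin m) (Fin m) R) (v : Fin (m+1) → R) :
    ext1 Q *ᵥ v = Fin.cons (v 0) (Q *ᵥ fun k => v k.succ) := by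
  ext i
  refine Fin.cases ?_ (fun i => ?_) i <;>
    simp [Matrix.mulVec, dotProduct, Fin.sum_univ_succ]

lemma conj_00 {m : ℕ} (Q Q' : Matrix (Fin m) (Fin m) R) (M : Matrix (Fin (m+1)) (Fin (m+1)) R) :
    (ext1 Q * M * ext1 Q') 0 0 = M 0 0 := by
  simp [Matrix.mul_apply, Fin.sum_univ_succ]

lemma conj_s0 {m : ℕ} (Q Q' : Matrix (Fin m) (Fin m) R) (M : Matrix (Fin (m+1)) (Fin (m+1)) R)
    (i : Fin m) :
    (ext1 Q * M * ext1 Q') i.succ 0 = (Q *ᵥ fun k => M k.succ 0) i := by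
  simp [Matrix.mul_apply, Fin.sum_univ_succ, Matrix.mulVec, dotProduct]

lemma conj_ss {m : ℕ} (Q Q' : Matrix (Fin m) (Fin m) R) (M : Matrix (Fin (m+1)) (Fin (m+1)) R)
    (i j : Fin m) :
    (ext1 Q * M * ext1 Q') i.succ j.succ
      = (Q * (M.submatrix Fin.succ Fin.succ) * Q') i j := by
  simp [Matrix.mul_apply, Fin.sum_univ_succ, Finset.sum_mul, Finset.mul_sum]

open Stmt8aux

@[simp] lemma succ_succ_ne_one {k : ℕ} (j : Fin k) : (j.succ.succ : Fin (k+2)) ≠ 1 := by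
  simp [Fin.ext_iff]
@[simp] lemma one_ne_succ_succ {k : ℕ} (j : Fin k) : (1 : Fin (k+2)) ≠ j.succ.succ := by
  simp [Fin.ext_iff]

lemma one_eq_zero_succ (k : ℕ) : (1 : Fin (k+2)) = (0 : Fin (k+1)).succ := rfl

def co3 {k : ℕ} (x y : R) : Fin (k+2) → R := Fin.cons x (Fin.cons y 0)

@[simp] lemma co3_0 {k : ℕ} (x y : R) : co3 (k := k) x y 0 = x := rfl
@[simp] lemma co3_1 {k : ℕ} (x y : R) : co3 (k := k) x y 1 = y := rfl
@[simp] lemma co3_t {k : ℕ} (x y : R) (j : Fin k) : co3 (k := k) x y j.succ.succ = 0 := by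
  simp [co3]

def ext2 {k : ℕ} (a b c d : R) : Matrix (Fin (k+2)) (Fin (k+2)) R :=
  Matrix.of (Fin.cons (co3 a b) (Fin.cons (co3 c d)
    (fun i j => if j = i.succ.succ then (1:R) else 0)))

@[simp] lemma ext2_row0 {k : ℕ} (a b c d : R) (j) : ext2 (k := k) a b c d 0 j = co3 a b j := rfl
@[simp] lemma ext2_row1 {k : ℕ} (a b c d : R) (j) : ext2 (k := k) a b c d 1 j = co3 c d j := rfl
@[simp] lemma ext2_rowt {k : ℕ} (a b c d : R) (i : Fin k) (j) :
    ext2 (k := k) a b c d i.succ.succ j = if j = i.succ.succ then (1:R) else 0 := by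
  simp [ext2]

lemma ext2_mul {k : ℕ} (a b c d a' b' c' d' : R) :
    ext2 (k := k) a b c d * ext2 a' b' c' d'
      = ext2 (a*a'+b*c') (a*b'+b*d') (c*a'+d*c') (c*b'+d*d') := by
  ext i j
  refine Fin.cases ?_ (fun i => Fin.cases ?_ (fun i' => ?_) i) i <;>
    refine Fin.cases ?_ (fun j => Fin.cases ?_ (fun j' => ?_) j) j <;>
      simp [Matrix.mul_apply, Fin.sum_univ_succ, ← one_eq_zero_succ, ite_mul,
        Finset.sum_ite_eq, Fin.succ_inj, eq_comm]

lemma ext2_one {k : ℕ} : ext2 (k := k) (1:R) 0 0 1 = 1 := by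
  ext i j
  refine Fin.cases ?_ (fun i => Fin.cases ?_ (fun i' => ?_) i) i <;>
    refine Fin.cases ?_ (fun j => Fin.cases ?_ (fun j' => ?_) j) j <;>
      simp [Matrix.one_apply, ← one_eq_zero_succ, Fin.succ_inj, Fin.succ_ne_zero,
        (Fin.succ_ne_zero _).symm, eq_comm]

lemma ext2_mulVec_co3 {k : ℕ} (a b c d x y : R) :
    ext2 (k := k) a b c d *ᵥ co3 x y = co3 (a*x+b*y) (c*x+d*y) := by
  ext i
  refine Fin.cases ?_ (fun i => Fin.cases ?_ (fun i' => ?_) i) i <;>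
    simp [Matrix.mulVec, dotProduct, Fin.sum_univ_succ, ← one_eq_zero_succ, ite_mul,
      Finset.sum_ite_eq]


section
variable {R : Type*} [CommRing R] [IsDomain R] [IsPrincipalIdealRing R]

lemma vec_lemma : ∀ (m : ℕ) (v : Fin m → R),
    ∃ (Q Q' : Matrix (Fin m) (Fin m) R) (g : R),
      Q * Q' = 1 ∧ Q' * Q = 1 ∧ (Q *ᵥ v = fun i : Fin m => if (i:ℕ) = 0 then g else 0) ∧
      Ideal.span {g} = Ideal.span (Set.range v) := by
  intro m
  induction m with
  | zero =>
      intro v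
      refine ⟨1, 1, 0, by simp, by simp, funext fun i => i.elim0, ?_⟩
      rw [Set.range_eq_empty v]
      simp
  | succ m ih =>
      intro v
      obtain ⟨Q₁, Q₁', g₁, h1, h2, h3, h4⟩ := ih (Fin.tail v)
      have hrange : Ideal.span (Set.range v) = Ideal.span {v 0, g₁} := by
        have h5 : Set.range v = insert (v 0) (Set.range (Fin.tail v)) := by
          conv_lhs => rw [← Fin.cons_self_tail v]
          exact Fin.range_cons _ _
        rw [h5, Ideal.span_insert, ← h4, ← Ideal.span_insert]
      obtain ⟨g, hg⟩ := Submodule.IsPrincipal.principal (Ideal.span {v 0, g₁})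
      have hgsymm : Ideal.span {g} = Ideal.span {v 0, g₁} := hg.symm
      obtain ⟨a', ha'⟩ := Ideal.mem_span_singleton'.mp
        (show v 0 ∈ Ideal.span {g} by
          rw [hgsymm]; exact Ideal.subset_span (Set.mem_insert _ _))
      obtain ⟨b', hb'⟩ := Ideal.mem_span_singleton'.mp
        (show g₁ ∈ Ideal.span {g} by
          rw [hgsymm]; exact Ideal.subset_span (by simp))
      obtain ⟨p, q, hpq⟩ := Ideal.mem_span_pair.mp
        (by rw [hg]; exact Ideal.mem_span_singleton_self g : g ∈ Ideal.span {v 0, g₁})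
      clear ih
      cases m with
      | zero =>
          refine ⟨1, 1, v 0, by simp, by simp, ?_, ?_⟩
          · rw [Matrix.one_mulVec]
            funext i
            have hi : i = 0 := Fin.ext (by omega)
            rw [hi]
            simp
          · have hr : Set.range v = {v 0} := by
              apply Set.eq_of_subset_of_subset
              · rintro x ⟨i, rfl⟩
                rw [show i = 0 from Fin.ext (by omega)]
                rfl
              · rintro x hx
                exact ⟨0, (Set.mem_singleton_iff.mp hx).symm⟩
            rw [hr]
      | succ k =>
          have hmid : ext1 Q₁ *ᵥ v = co3 (v 0) g₁ := by
            rw [ext1_mulVec, show (fun kk : Fin (k+1) => v kk.succ) = Fin.tail v from rfl, h3]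
            funext i
            refine Fin.cases ?_ (fun i => Fin.cases ?_ (fun i' => ?_) i) i <;> simp [co3]
          by_cases hg0 : g = 0
          · rw [hg0, mul_zero] at ha' hb'
            refine ⟨ext1 Q₁, ext1 Q₁', 0, by rw [ext1_mul, h1, ext1_one],
              by rw [ext1_mul, h2, ext1_one], ?_, ?_⟩
            · rw [hmid]
              funext i
              refine Fin.cases ?_ (fun i => Fin.cases ?_ (fun i' => ?_) i) i <;>
                simp [← ha', ← hb']
            · rw [hrange, hg, hg0]
          · have hdet : p * a' + q * b' = 1 :=
              mul_left_cancel₀ hg0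
                (show g * (p*a'+q*b') = g * 1 by
                  rw [mul_one]; conv_rhs => rw [← hpq, ← ha', ← hb']
                  ring)
            set T := ext2 (k := k) p q (-b') a' with hT
            set T' := ext2 (k := k) a' (-q) b' p with hT'
            have hTT' : T * T' = 1 := by
              rw [hT, hT', ext2_mul, show p*a'+q*b' = (1:R) from hdet,
                show p*(-q)+q*p = (0:R) by ring, show (-b')*a'+a'*b' = (0:R) by ring,
                show (-b')*(-q)+a'*p = (1:R) by rw [← hdet]; ring, ext2_one]
            have hT'T : T' * T = 1 := by
              rw [hT, hT', ext2_mul, show a'*p+(-q)*(-b') = (1:R) by rw [← hdet]; ring,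
                show a'*q+(-q)*a' = (0:R) by ring, show b'*p+p*(-b') = (0:R) by ring,
                show b'*q+p*a' = (1:R) by rw [← hdet]; ring, ext2_one]
            refine ⟨T * ext1 Q₁, ext1 Q₁' * T', g, ?_, ?_, ?_, by rw [hrange]; exact hg.symm⟩
            · rw [mul_assoc, ← mul_assoc (ext1 Q₁), ext1_mul, h1, ext1_one, one_mul, hTT']
            · rw [mul_assoc, ← mul_assoc T', hT'T, one_mul, ext1_mul, h2, ext1_one]
            · rw [← Matrix.mulVec_mulVec, hmid, hT, ext2_mulVec_co3,
                show p * v 0 + q * g₁ = g from hpq,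
                show (-b') * v 0 + a' * g₁ = (0:R) by rw [← ha', ← hb']; ring]
              funext i
              refine Fin.cases ?_ (fun i => Fin.cases ?_ (fun i' => ?_) i) i <;> simp

lemma ext1_row0 {m : ℕ} (Q : Matrix (Fin m) (Fin m) R) :
    ∀ i j : Fin (m+1), (i:ℕ) = 0 → ext1 Q i j = if i = j then 1 else 0 := by
  intro i j hi
  have h : i = 0 := Fin.ext (by simpa using hi)
  subst h
  refine Fin.cases ?_ (fun j' => ?_) j
  · simp
  · simp [(Fin.succ_ne_zero j').symm]

lemma ext1_col0 {m : ℕ} (Q : Matrix (Fin m) (Fin m) R) :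
    ∀ i j : Fin (m+1), (j:ℕ) = 0 → ext1 Q i j = if i = j then 1 else 0 := by
  intro i j hj
  have h : j = 0 := Fin.ext (by simpa using hj)
  subst h
  refine Fin.cases ?_ (fun i' => ?_) i
  · simp
  · simp [Fin.succ_ne_zero i']

lemma hess : ∀ (n : ℕ) (M : Matrix (Fin n) (Fin n) R),
    ∃ P P' : Matrix (Fin n) (Fin n) R,
      P * P' = 1 ∧ P' * P = 1 ∧
      (∀ i j : Fin n, (j:ℕ) = 0 → P' i j = if i = j then 1 else 0) ∧
      (∀ i j : Fin n, (j:ℕ)+1 < (i:ℕ) → (P' * M * P) i j = 0) ∧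
      (∀ i j : Fin n, (i:ℕ) = 0 → (j:ℕ) = 0 → (P' * M * P) i j = M i j) ∧
      ∃ g : R, (∀ i j : Fin n, (i:ℕ) = 1 → (j:ℕ) = 0 → (P' * M * P) i j = g) ∧
        Ideal.span {g} = Ideal.span {x : R | ∃ i j : Fin n, 1 ≤ (i:ℕ) ∧ (j:ℕ) = 0 ∧ x = M i j} := by
  intro n
  induction n with
  | zero =>
      intro M
      refine ⟨1, 1, by simp, by simp, fun i => i.elim0, fun i => i.elim0, fun i => i.elim0,
        0, fun i => i.elim0, ?_⟩
      have he : {x : R | ∃ i j : Fin 0, 1 ≤ (i:ℕ) ∧ (j:ℕ) = 0 ∧ x = M i j} = ∅ := by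
        rw [Set.eq_empty_iff_forall_notMem]
        rintro x ⟨i, -⟩
        exact i.elim0
      rw [he]
      simp
  | succ n ih =>
      intro M
      obtain ⟨Q, Q', g, hQQ', hQ'Q, hQv, hgspan⟩ := vec_lemma n (fun k => M k.succ 0)
      obtain ⟨P₂, P₂', h1, h2, hc2', hhess2, h002, -⟩ :=
        ih (Q * (M.submatrix Fin.succ Fin.succ) * Q')
      refine ⟨ext1 (Q' * P₂), ext1 (P₂' * Q), ?_, ?_, ext1_col0 _, ?_, ?_, g, ?_, ?_⟩
      · rw [ext1_mul, show (Q' * P₂) * (P₂' * Q) = 1 by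
          rw [mul_assoc, ← mul_assoc P₂, h1, one_mul, hQ'Q], ext1_one]
      · rw [ext1_mul, show (P₂' * Q) * (Q' * P₂) = 1 by
          rw [mul_assoc, ← mul_assoc Q, hQQ', one_mul, h2], ext1_one]
      all_goals
        have hF0 : ∀ i : Fin n,
            (ext1 (P₂' * Q) * M * ext1 (Q' * P₂)) i.succ 0 = if (i:ℕ) = 0 then g else 0 := by
          intro i
          rw [conj_s0, ← Matrix.mulVec_mulVec, hQv]
          have hn0 : 0 < n := i.pos
          have hv : (fun k : Fin n => if (k:ℕ) = 0 then g else 0)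
              = (fun k => if k = ⟨0, hn0⟩ then g else 0) := by
            funext k
            exact if_congr ⟨fun h => Fin.ext h, fun h => by rw [h]⟩ rfl rfl
          rw [hv]
          have : (P₂' *ᵥ fun k => if k = ⟨0, hn0⟩ then g else 0) i = P₂' i ⟨0, hn0⟩ * g := by
            simp [Matrix.mulVec, dotProduct, mul_ite, Finset.sum_ite_eq']
          rw [this, hc2' i ⟨0, hn0⟩ rfl]
          by_cases hii : (i:ℕ) = 0
          · rw [if_pos (Fin.ext hii : i = ⟨0, hn0⟩), if_pos hii, one_mul]
          · rw [if_neg (fun h => hii (congrArg Fin.val h)), if_neg hii, zero_mul]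
        have hFss : ∀ i j : Fin n, (ext1 (P₂' * Q) * M * ext1 (Q' * P₂)) i.succ j.succ
            = (P₂' * (Q * (M.submatrix Fin.succ Fin.succ) * Q') * P₂) i j := by
          intro i j
          rw [conj_ss]
          congr 1
          simp only [mul_assoc]
      · -- Hessenberg
        intro i j hij
        revert hij
        refine Fin.cases ?_ (fun i' => ?_) i <;> intro hij
        · simp at hij
        · revert hij
          refine Fin.cases ?_ (fun j' => ?_) j <;> intro hij
          · rw [hF0 i', if_neg (by simp at hij; omega)]
          · rw [hFss]
            apply hhess2
            simp at hij ⊢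
            omega
      · -- (0,0) entry
        intro i j hi hj
        have h : i = 0 := Fin.ext (by simpa using hi)
        have h' : j = 0 := Fin.ext (by simpa using hj)
        subst h h'
        exact conj_00 _ _ _
      · -- (1,0) entry is g
        intro i j hi hj
        have h' : j = 0 := Fin.ext (by simpa using hj)
        subst h'
        revert hi
        refine Fin.cases ?_ (fun i' => ?_) i <;> intro hi
        · simp at hi
        · rw [hF0 i', if_pos (by simpa using hi)]
      · -- span
        have hset : Set.range (fun k : Fin n => M k.succ 0)
            = {x : R | ∃ i j : Fin (n+1), 1 ≤ (i:ℕ) ∧ (j:ℕ) = 0 ∧ x = M i j} := by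
          ext x
          constructor
          · rintro ⟨k, rfl⟩
            exact ⟨k.succ, 0, by simp, by simp, rfl⟩
          · rintro ⟨i, j, h1i, h0j, rfl⟩
            have hj : j = 0 := Fin.ext (by simpa using h0j)
            revert h1i
            refine Fin.cases ?_ (fun i' => ?_) i <;> intro h1i
            · simp at h1i
            · exact ⟨i', by rw [hj]⟩
        rw [hgspan, hset]

end

end Stmt8aux

open Stmt8aux

/-- First Hessenberg form: every `A ∈ Sp_{2n}(R)` over a PID is symplectically conjugate
to a matrix `A' = B⁻¹AB` whose upper-left `n×n` block is upper Hessenberg, with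
`a'_{1,1} = a_{1,1}` and `a'_{2,1}` a gcd of `a_{2,1}, …, a_{n,1}` up to units (expressed
as an equality of the generated ideals). -/
theorem stmt8 {R : Type*} [CommRing R] [IsDomain R] [IsPrincipalIdealRing R]
    {n : ℕ} (hn : 3 ≤ n)
    (A : Matrix (Fin n ⊕ Fin n) (Fin n ⊕ Fin n) R) (hA : IsSymp A) :
    ∃ B : Matrix (Fin n ⊕ Fin n) (Fin n ⊕ Fin n) R, IsSymp B ∧
      (∀ i j : Fin n, (j : ℕ) + 1 < (i : ℕ) → (B⁻¹ * A * B) (Sum.inl i) (Sum.inl j) = 0) ∧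
      (B⁻¹ * A * B) (Sum.inl ⟨0, by omega⟩) (Sum.inl ⟨0, by omega⟩) =
        A (Sum.inl ⟨0, by omega⟩) (Sum.inl ⟨0, by omega⟩) ∧
      Ideal.span {(B⁻¹ * A * B) (Sum.inl ⟨1, by omega⟩) (Sum.inl ⟨0, by omega⟩)} =
        Ideal.span {x : R | ∃ i : Fin n, 1 ≤ (i : ℕ) ∧ x = A (Sum.inl i) (Sum.inl ⟨0, by omega⟩)} := by
  classical
  obtain ⟨P, P', hPP', hP'P, -, hhess, h00, g, hg, hspan⟩ := hess n (A.toBlocks₁₁)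
  set B : Matrix (Fin n ⊕ Fin n) (Fin n ⊕ Fin n) R := fromBlocks P 0 0 P'ᵀ with hB
  have hBC : B * fromBlocks P' 0 0 Pᵀ = 1 := by
    rw [hB, fromBlocks_multiply]
    simp only [Matrix.mul_zero, Matrix.zero_mul, add_zero, zero_add]
    rw [hPP', ← Matrix.transpose_mul, hPP', Matrix.transpose_one, fromBlocks_one]
  have hBinv : B⁻¹ = fromBlocks P' 0 0 Pᵀ := Matrix.inv_eq_right_inv hBC
  have hsympB : IsSymp B := by
    show Bᵀ * Jmat n R * B = Jmat n R
    rw [hB, Jmat, fromBlocks_transpose, fromBlocks_multiply, fromBlocks_multiply]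
    simp only [Matrix.transpose_zero, Matrix.transpose_transpose, Matrix.mul_zero,
      Matrix.zero_mul, Matrix.mul_one, Matrix.one_mul, add_zero, zero_add,
      Matrix.mul_neg, Matrix.neg_mul, Matrix.mul_one]
    rw [← Matrix.transpose_mul, hP'P, Matrix.transpose_one, neg_zero]
  have hABB : B⁻¹ * A * B = fromBlocks (P' * A.toBlocks₁₁ * P) (P' * A.toBlocks₁₂ * P'ᵀ)
      (Pᵀ * A.toBlocks₂₁ * P) (Pᵀ * A.toBlocks₂₂ * P'ᵀ) := by
    rw [hBinv, hB]
    conv_lhs => rw [← fromBlocks_toBlocks A]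
    rw [fromBlocks_multiply, fromBlocks_multiply]
    simp only [Matrix.mul_zero, Matrix.zero_mul, add_zero, zero_add, Matrix.mul_assoc]
  have hentry : ∀ i j : Fin n,
      (B⁻¹ * A * B) (Sum.inl i) (Sum.inl j) = (P' * A.toBlocks₁₁ * P) i j := by
    intro i j
    rw [hABB]
    rfl
  refine ⟨B, hsympB, ?_, ?_, ?_⟩
  · intro i j hij
    rw [hentry]
    exact hhess i j hij
  · rw [hentry, h00 ⟨0, by omega⟩ ⟨0, by omega⟩ rfl rfl]
    rfl
  · rw [hentry, hg ⟨1, by omega⟩ ⟨0, by omega⟩ rfl rfl, hspan]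
    congr 1
    ext x
    constructor
    · rintro ⟨i, j, h1, h0, rfl⟩
      refine ⟨i, h1, ?_⟩
      rw [show j = ⟨0, by omega⟩ from Fin.ext (by simpa using h0)]
      rfl
    · rintro ⟨i, h1, rfl⟩
      exact ⟨i, ⟨0, by omega⟩, h1, rfl, rfl⟩
end

section
/- Let R be a ring of stable range at most 2 such that Sp₄(R) is generated by its root elements, and let n ≥ 2. Embedding Sp₄(R) into Sp_{2n}(R) in the bottom-right corner blocks, the elementary subgroup of Sp_{2n}(R) decomposes as E(C_n,R) = (U⁺(C_n,R)·U⁻(C_n,R))²·Sp₄(R), meaning every element of E(C_n,R) is a product u₁⁺u₁⁻u₂⁺u₂⁻·Z with u_i^± unipotent and Z in the embedded Sp₄(R). -/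
open Matrix

/-- The root elements of `Sp_{2n}(R)` for the positive roots of `C_n`. -/
def PosRootElems (n : ℕ) (R : Type*) [CommRing R] :
    Set (Matrix (Fin n ⊕ Fin n) (Fin n ⊕ Fin n) R) :=
  {M | ∃ t : R,
    (∃ i j : Fin n, i < j ∧ M = 1 + t • (Matrix.single (Sum.inl i) (Sum.inl j) 1 -
        Matrix.single (Sum.inr j) (Sum.inr i) 1)) ∨
    (∃ i j : Fin n, i < j ∧ M = 1 + t • (Matrix.single (Sum.inl i) (Sum.inr j) 1 +
        Matrix.single (Sum.inl j) (Sum.inr i) 1)) ∨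
    (∃ i : Fin n, M = 1 + t • Matrix.single (Sum.inl i) (Sum.inr i) 1)}

/-- The root elements of `Sp_{2n}(R)` for the negative roots of `C_n`. -/
def NegRootElems (n : ℕ) (R : Type*) [CommRing R] :
    Set (Matrix (Fin n ⊕ Fin n) (Fin n ⊕ Fin n) R) :=
  {M | ∃ t : R,
    (∃ i j : Fin n, j < i ∧ M = 1 + t • (Matrix.single (Sum.inl i) (Sum.inl j) 1 -
        Matrix.single (Sum.inr j) (Sum.inr i) 1)) ∨
    (∃ i j : Fin n, i < j ∧ M = 1 + t • (Matrix.single (Sum.inr j) (Sum.inl i) 1 +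
        Matrix.single (Sum.inr i) (Sum.inl j) 1)) ∨
    (∃ i : Fin n, M = 1 + t • Matrix.single (Sum.inr i) (Sum.inl i) 1)}

/-- All root elements of `Sp_{2n}(R)`. -/
def RootElems (n : ℕ) (R : Type*) [CommRing R] :
    Set (Matrix (Fin n ⊕ Fin n) (Fin n ⊕ Fin n) R) :=
  PosRootElems n R ∪ NegRootElems n R

/-- `EL_Q`: all conjugates of root elements by symplectic matrices. -/
def ELQ (n : ℕ) (R : Type*) [CommRing R] :
    Set (Matrix (Fin n ⊕ Fin n) (Fin n ⊕ Fin n) R) :=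
  {M | ∃ E ∈ RootElems n R, ∃ g, IsSymp g ∧ M = g * E * g⁻¹}

/-- The copy of `Sp₄(R)` in `Sp_{2n}(R)` supported on the coordinates
`n−1, n, 2n−1, 2n`. -/
def EmbSp4 (n : ℕ) (hn : 2 ≤ n) (R : Type*) [CommRing R] :
    Set (Matrix (Fin n ⊕ Fin n) (Fin n ⊕ Fin n) R) :=
  {M | IsSymp M ∧ ∀ p q : Fin n ⊕ Fin n,
    (p ∉ ({Sum.inl ⟨n - 2, by omega⟩, Sum.inl ⟨n - 1, by omega⟩,
           Sum.inr ⟨n - 2, by omega⟩, Sum.inr ⟨n - 1, by omega⟩} :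
        Set (Fin n ⊕ Fin n)) ∨
     q ∉ ({Sum.inl ⟨n - 2, by omega⟩, Sum.inl ⟨n - 1, by omega⟩,
           Sum.inr ⟨n - 2, by omega⟩, Sum.inr ⟨n - 1, by omega⟩} :
        Set (Fin n ⊕ Fin n))) →
    M p q = (1 : Matrix (Fin n ⊕ Fin n) (Fin n ⊕ Fin n) R) p q}

namespace Sp

variable {R : Type*} [CommRing R] {n : ℕ}

abbrev Idx (n : ℕ) := Fin n ⊕ Fin n

/-- numeric index of a coordinate -/
def idx : Idx n → ℕ := Sum.elim Fin.val Fin.val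

@[simp] lemma idx_inl (i : Fin n) : idx (Sum.inl i) = i.val := rfl
@[simp] lemma idx_inr (i : Fin n) : idx (Sum.inr i) = i.val := rfl

lemma Jmat_apply_ll (i j : Fin n) : Jmat n R (Sum.inl i) (Sum.inl j) = 0 := rfl
lemma Jmat_apply_lr (i j : Fin n) :
    Jmat n R (Sum.inl i) (Sum.inr j) = if i = j then 1 else 0 := by
  simp [Jmat, fromBlocks, one_apply]
lemma Jmat_apply_rl (i j : Fin n) :
    Jmat n R (Sum.inr i) (Sum.inl j) = if i = j then -1 else 0 := by
  simp [Jmat, fromBlocks, one_apply]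
  split <;> simp
lemma Jmat_apply_rr (i j : Fin n) : Jmat n R (Sum.inr i) (Sum.inr j) = 0 := rfl

lemma Jmat_mulVec (v : Idx n → R) :
    Jmat n R *ᵥ v = Sum.elim (fun i => v (Sum.inr i)) (fun i => -v (Sum.inl i)) := by
  funext p
  cases p with
  | inl i =>
    simp [mulVec, dotProduct, Fintype.sum_sum_type, Jmat_apply_ll, Jmat_apply_lr,
      ite_mul, Finset.sum_ite_eq]
  | inr i =>
    simp [mulVec, dotProduct, Fintype.sum_sum_type, Jmat_apply_rl, Jmat_apply_rr,
      ite_mul, Finset.sum_ite_eq]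

lemma vecMul_Jmat (v : Idx n → R) :
    v ᵥ* Jmat n R = Sum.elim (fun i => -v (Sum.inr i)) (fun i => v (Sum.inl i)) := by
  funext p
  cases p with
  | inl i =>
    simp [vecMul, dotProduct, Fintype.sum_sum_type, Jmat_apply_ll, Jmat_apply_rl,
      mul_ite, Finset.sum_ite_eq']
  | inr i =>
    simp [vecMul, dotProduct, Fintype.sum_sum_type, Jmat_apply_lr, Jmat_apply_rr,
      mul_ite, Finset.sum_ite_eq']

lemma Jmat_mul_Jmat : (Jmat n R) * (Jmat n R) = -1 := by
  simp [Jmat, fromBlocks_multiply]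
  ext p q
  cases p <;> cases q <;> simp [fromBlocks, one_apply] <;> split <;> simp_all

lemma Jmat_transpose : (Jmat n R)ᵀ = -(Jmat n R) := by
  simp [Jmat, fromBlocks_transpose, fromBlocks_neg, transpose_one]

section IsSympLemmas

variable {A B : Matrix (Idx n) (Idx n) R}

lemma isSymp_one : IsSymp (1 : Matrix (Idx n) (Idx n) R) := by
  simp [IsSymp]

lemma isSymp_mul (hA : IsSymp A) (hB : IsSymp B) : IsSymp (A * B) := by
  unfold IsSymp at *
  rw [transpose_mul]
  calc Bᵀ * Aᵀ * Jmat n R * (A * B) = Bᵀ * (Aᵀ * Jmat n R * A) * B := by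
        noncomm_ring
    _ = Bᵀ * Jmat n R * B := by rw [hA]
    _ = Jmat n R := hB

lemma isSymp_mul_left_inv (hA : IsSymp A) :
    (-(Jmat n R * Aᵀ * Jmat n R)) * A = 1 := by
  have : Jmat n R * (Aᵀ * Jmat n R * A) = Jmat n R * Jmat n R := by rw [hA]
  rw [Jmat_mul_Jmat] at this
  calc (-(Jmat n R * Aᵀ * Jmat n R)) * A = -(Jmat n R * (Aᵀ * Jmat n R * A)) := by
        noncomm_ring
    _ = -(-1) := by rw [this]
    _ = 1 := neg_neg 1

lemma isSymp_mul_right_inv (hA : IsSymp A) :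
    A * (-(Jmat n R * Aᵀ * Jmat n R)) = 1 :=
  mul_eq_one_comm.mpr (isSymp_mul_left_inv hA)

/-- the "second" symplectic condition -/
lemma isSymp_JJt (hA : IsSymp A) : A * Jmat n R * Aᵀ = Jmat n R := by
  have h := (isSymp_mul_right_inv hA)
  have : A * (-(Jmat n R * Aᵀ * Jmat n R)) * Jmat n R = 1 * Jmat n R := by rw [h]
  rw [one_mul] at this
  have h2 : -(A * Jmat n R * Aᵀ) * (Jmat n R * Jmat n R) = Jmat n R := by
    calc -(A * Jmat n R * Aᵀ) * (Jmat n R * Jmat n R)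
        = A * (-(Jmat n R * Aᵀ * Jmat n R)) * Jmat n R := by noncomm_ring
      _ = Jmat n R := this
  rw [Jmat_mul_Jmat] at h2
  calc A * Jmat n R * Aᵀ = -(A * Jmat n R * Aᵀ) * (-1) := by noncomm_ring
    _ = Jmat n R := h2

lemma isSymp_transpose (hA : IsSymp A) : IsSymp Aᵀ := by
  unfold IsSymp
  rw [transpose_transpose]
  have h := (isSymp_JJt hA)
  calc Aᵀᵀ * Jmat n R * Aᵀ = A * Jmat n R * Aᵀ := by rw [transpose_transpose]
    _ = Jmat n R := h

end IsSympLemmas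

end Sp
section Chunk2

namespace Sp

variable {R : Type*} [CommRing R] {n : ℕ}

open Matrix

/-- standard basis vector -/
def eV (p : Idx n) : Idx n → R := Pi.single p 1

@[simp] lemma eV_apply (p q : Idx n) : (eV p : Idx n → R) q = if q = p then 1 else 0 := by
  simp [eV, Pi.single_apply]

lemma eV_dot (p : Idx n) (w : Idx n → R) : eV p ⬝ᵥ w = w p := by
  simp [dotProduct, eV, Pi.single_apply, ite_mul]

lemma dot_eV (p : Idx n) (w : Idx n → R) : w ⬝ᵥ eV p = w p := by
  simp [dotProduct, eV, Pi.single_apply, mul_ite]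

lemma dot_split (u v : Idx n → R) :
    u ⬝ᵥ v = (∑ j, u (Sum.inl j) * v (Sum.inl j)) + ∑ j, u (Sum.inr j) * v (Sum.inr j) := by
  simp [dotProduct, Fintype.sum_sum_type]

-- outer product lemmas
lemma vecMulVec_mul_mat (u v : Idx n → R) (M : Matrix (Idx n) (Idx n) R) :
    vecMulVec u v * M = vecMulVec u (v ᵥ* M) := by
  ext p q
  simp only [mul_apply, vecMulVec_apply, vecMul, dotProduct, Finset.mul_sum]
  exact Finset.sum_congr rfl fun r _ => by ring

lemma mat_mul_vecMulVec (u v : Idx n → R) (M : Matrix (Idx n) (Idx n) R) :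
    M * vecMulVec u v = vecMulVec (M *ᵥ u) v := by
  ext p q
  simp only [mul_apply, vecMulVec_apply, mulVec, dotProduct, Finset.sum_mul]
  exact Finset.sum_congr rfl fun r _ => by ring

lemma vecMulVec_mul_vecMulVec (u v u' v' : Idx n → R) :
    vecMulVec u v * vecMulVec u' v' = (v ⬝ᵥ u') • vecMulVec u v' := by
  ext p q
  simp only [mul_apply, vecMulVec_apply, Matrix.smul_apply, smul_eq_mul, dotProduct,
    Finset.sum_mul]
  exact Finset.sum_congr rfl fun r _ => by ring

lemma vecMulVec_mulVec (u v w : Idx n → R) :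
    vecMulVec u v *ᵥ w = (v ⬝ᵥ w) • u := by
  funext p
  simp only [mulVec, vecMulVec_apply, dotProduct, Pi.smul_apply, smul_eq_mul,
    Finset.sum_mul]
  exact Finset.sum_congr rfl fun r _ => by ring

lemma vecMulVec_transpose (u v : Idx n → R) :
    (vecMulVec u v)ᵀ = vecMulVec v u := by
  ext p q; simp [vecMulVec_apply, transpose_apply, mul_comm]

lemma vecMulVec_add_right (u v v' : Idx n → R) :
    vecMulVec u (v + v') = vecMulVec u v + vecMulVec u v' := by
  ext p q; simp [vecMulVec_apply, mul_add]

lemma vecMulVec_add_left (u u' v : Idx n → R) :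
    vecMulVec (u + u') v = vecMulVec u v + vecMulVec u' v := by
  ext p q; simp [vecMulVec_apply, add_mul]

lemma vecMulVec_smul_right (u v : Idx n → R) (d : R) :
    vecMulVec u (d • v) = d • vecMulVec u v := by
  ext p q; simp [vecMulVec_apply, smul_eq_mul]; ring

/-- the row vector of `Umat` -/
def rv (k : Fin n) (a b : Fin n → R) (c : R) : Idx n → R :=
  Sum.elim a b + c • eV (Sum.inr k)

/-- the column vector of `Umat` -/
def sv (a b : Fin n → R) : Idx n → R :=
  Sum.elim b (fun j => -(a j))

@[simp] lemma rv_inl (k : Fin n) (a b : Fin n → R) (c : R) (j : Fin n) :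
    rv k a b c (Sum.inl j) = a j := by simp [rv]
@[simp] lemma rv_inr (k : Fin n) (a b : Fin n → R) (c : R) (j : Fin n) :
    rv k a b c (Sum.inr j) = b j + if j = k then c else 0 := by
  simp [rv]
@[simp] lemma sv_inl (a b : Fin n → R) (j : Fin n) : sv a b (Sum.inl j) = b j := rfl
@[simp] lemma sv_inr (a b : Fin n → R) (j : Fin n) : sv a b (Sum.inr j) = -(a j) := rfl

/-- upper unipotent element associated to the `k`-th hyperbolic pair -/
def Umat (k : Fin n) (a b : Fin n → R) (c : R) : Matrix (Idx n) (Idx n) R :=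
  1 + vecMulVec (eV (Sum.inl k)) (rv k a b c) + vecMulVec (sv a b) (eV (Sum.inr k))

/-- lower unipotent element -/
def Vmat (k : Fin n) (a b : Fin n → R) (c : R) : Matrix (Idx n) (Idx n) R :=
  (Umat k a b c)ᵀ

/-- admissible parameters: supported strictly above `k` -/
def Pgood (k : Fin n) (a b : Fin n → R) : Prop :=
  (∀ j : Fin n, j.val ≤ k.val → a j = 0) ∧ (∀ j : Fin n, j.val ≤ k.val → b j = 0)

lemma Pgood.ak {k : Fin n} {a b : Fin n → R} (h : Pgood k a b) : a k = 0 :=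
  h.1 k le_rfl
lemma Pgood.bk {k : Fin n} {a b : Fin n → R} (h : Pgood k a b) : b k = 0 :=
  h.2 k le_rfl

lemma rv_dot (k : Fin n) (a b : Fin n → R) (c : R) (w : Idx n → R) :
    rv k a b c ⬝ᵥ w =
      (∑ j, a j * w (Sum.inl j)) + (∑ j, b j * w (Sum.inr j)) + c * w (Sum.inr k) := by
  rw [dot_split]
  simp [add_mul, Finset.sum_add_distrib, ite_mul, Finset.sum_ite_eq', add_assoc]

lemma sv_dot (a b : Fin n → R) (w : Idx n → R) :
    sv a b ⬝ᵥ w = (∑ j, b j * w (Sum.inl j)) - ∑ j, a j * w (Sum.inr j) := by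
  rw [dot_split]
  simp [sub_eq_add_neg, Finset.sum_neg_distrib, neg_mul]

end Sp

end Chunk2
section Chunk3
namespace Sp
open Matrix

variable {R : Type*} [CommRing R] {n : ℕ}

lemma vecMulVec_zero_right (u : Idx n → R) : vecMulVec u (0 : Idx n → R) = 0 := by
  ext p q; simp [vecMulVec_apply]
lemma vecMulVec_zero_left (v : Idx n → R) : vecMulVec (0 : Idx n → R) v = 0 := by
  ext p q; simp [vecMulVec_apply]
lemma vecMulVec_neg_left (u v : Idx n → R) : vecMulVec (-u) v = -vecMulVec u v := by
  ext p q; simp [vecMulVec_apply]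

lemma eV_dot_eV (p q : Idx n) : (eV p : Idx n → R) ⬝ᵥ eV q = if p = q then 1 else 0 := by
  rw [eV_dot]; simp [eq_comm]

lemma rv_add (k : Fin n) (a b a' b' : Fin n → R) (c c' D : R) :
    rv k (a + a') (b + b') (c + c' + D) =
      rv k a b c + rv k a' b' c' + D • eV (Sum.inr k) := by
  funext p
  cases p with
  | inl j => simp [rv]
  | inr j => simp [rv, mul_ite]; split <;> ring

lemma sv_add (a b a' b' : Fin n → R) :
    sv (a + a') (b + b') = sv a b + sv a' b' := by
  funext p; cases p <;> simp [sv] <;> ring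

lemma rv_zero (k : Fin n) : rv k (0 : Fin n → R) 0 0 = 0 := by
  funext p; cases p <;> simp [rv]
lemma sv_zero : sv (0 : Fin n → R) 0 = 0 := by
  funext p; cases p <;> simp [sv]

lemma Umat_zero (k : Fin n) : Umat k (0 : Fin n → R) 0 0 = 1 := by
  simp [Umat, rv_zero, sv_zero, vecMulVec_zero_right, vecMulVec_zero_left]

lemma Umat_mul (k : Fin n) (a b a' b' : Fin n → R) (c c' : R)
    (ha : a k = 0) (ha' : a' k = 0) :
    Umat k a b c * Umat k a' b' c' =
      Umat k (a + a') (b + b')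
        (c + c' + ((∑ j, a j * b' j) - ∑ j, b j * a' j)) := by
  set D := ((∑ j, a j * b' j) - ∑ j, b j * a' j) with hD
  have h1 : vecMulVec (eV (Sum.inl k) : Idx n → R) (rv k a b c) *
      vecMulVec (eV (Sum.inl k)) (rv k a' b' c') = 0 := by
    rw [vecMulVec_mul_vecMulVec, dot_eV]
    simp [ha]
  have h2 : vecMulVec (eV (Sum.inl k) : Idx n → R) (rv k a b c) *
      vecMulVec (sv a' b') (eV (Sum.inr k)) =
      D • vecMulVec (eV (Sum.inl k)) (eV (Sum.inr k)) := by
    rw [vecMulVec_mul_vecMulVec, rv_dot]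
    simp [ha', hD, sub_eq_add_neg]
  have h3 : vecMulVec (sv a b) (eV (Sum.inr k) : Idx n → R) *
      vecMulVec (eV (Sum.inl k)) (rv k a' b' c') = 0 := by
    rw [vecMulVec_mul_vecMulVec, eV_dot_eV]
    simp
  have h4 : vecMulVec (sv a b) (eV (Sum.inr k) : Idx n → R) *
      vecMulVec (sv a' b') (eV (Sum.inr k)) = 0 := by
    rw [vecMulVec_mul_vecMulVec, eV_dot]
    simp [ha']
  unfold Umat
  rw [rv_add, sv_add, vecMulVec_add_right, vecMulVec_add_right, vecMulVec_smul_right,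
    vecMulVec_add_left]
  have expand : (1 + vecMulVec (eV (Sum.inl k)) (rv k a b c) + vecMulVec (sv a b) (eV (Sum.inr k))) *
      (1 + vecMulVec (eV (Sum.inl k)) (rv k a' b' c') + vecMulVec (sv a' b') (eV (Sum.inr k))) =
      1 + vecMulVec (eV (Sum.inl k)) (rv k a b c) + vecMulVec (sv a b) (eV (Sum.inr k))
        + vecMulVec (eV (Sum.inl k)) (rv k a' b' c') + vecMulVec (sv a' b') (eV (Sum.inr k))
        + (vecMulVec (eV (Sum.inl k)) (rv k a b c) * vecMulVec (eV (Sum.inl k)) (rv k a' b' c')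
        + vecMulVec (eV (Sum.inl k)) (rv k a b c) * vecMulVec (sv a' b') (eV (Sum.inr k))
        + vecMulVec (sv a b) (eV (Sum.inr k)) * vecMulVec (eV (Sum.inl k)) (rv k a' b' c')
        + vecMulVec (sv a b) (eV (Sum.inr k)) * vecMulVec (sv a' b') (eV (Sum.inr k))) := by
    noncomm_ring
  rw [expand, h1, h2, h3, h4]
  abel

lemma Umat_mul_neg (k : Fin n) (a b : Fin n → R) (c : R) (ha : a k = 0) :
    Umat k a b c * Umat k (-a) (-b) (-c) = 1 := by
  rw [Umat_mul k a b (-a) (-b) c (-c) ha (by simp [ha])]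
  have : a + -a = 0 := by funext j; simp
  have hb : b + -b = 0 := by funext j; simp
  rw [this, hb]
  have : c + -c + ((∑ j, a j * (-b) j) - ∑ j, b j * (-a) j) = 0 := by
    simp [mul_comm]
  rw [this, Umat_zero]

-- J actions on the building-block vectors
lemma J_mulVec_eL (k : Fin n) : Jmat n R *ᵥ eV (Sum.inl k) = -eV (Sum.inr k) := by
  rw [Jmat_mulVec]; funext p; cases p <;> simp [eq_comm]

lemma J_mulVec_sv (a b : Fin n → R) :
    Jmat n R *ᵥ sv a b = -Sum.elim a b := by
  rw [Jmat_mulVec]; funext p; cases p <;> simp [sv]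

lemma eL_vecMul_J (k : Fin n) : (eV (Sum.inl k) : Idx n → R) ᵥ* Jmat n R = eV (Sum.inr k) := by
  rw [vecMul_Jmat]; funext p; cases p <;> simp [eq_comm]

lemma sv_vecMul_J (a b : Fin n → R) : sv a b ᵥ* Jmat n R = Sum.elim a b := by
  rw [vecMul_Jmat]; funext p; cases p <;> simp [sv]

lemma rv_sub_elim (k : Fin n) (a b : Fin n → R) (c : R) :
    Sum.elim a b = rv k a b c - c • eV (Sum.inr k) := by
  unfold rv; abel

lemma isSymp_Umat (k : Fin n) (a b : Fin n → R) (c : R) (ha : a k = 0) :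
    IsSymp (Umat k a b c) := by
  set r := rv k a b c with hr
  set s := sv a b with hs
  set A1 := vecMulVec (eV (Sum.inl k) : Idx n → R) r with hA1
  set B1 := vecMulVec s (eV (Sum.inr k) : Idx n → R) with hB1
  have hUt : (Umat k a b c)ᵀ = 1 + vecMulVec r (eV (Sum.inl k)) + vecMulVec (eV (Sum.inr k)) s := by
    unfold Umat
    rw [transpose_add, transpose_add, transpose_one, vecMulVec_transpose, vecMulVec_transpose]
  unfold IsSymp
  rw [hUt]
  have hJW : Jmat n R * Umat k a b c =
      Jmat n R + vecMulVec (-eV (Sum.inr k)) r + vecMulVec (-Sum.elim a b) (eV (Sum.inr k)) := by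
    unfold Umat
    rw [mul_add, mul_add, mul_one, mat_mul_vecMulVec, mat_mul_vecMulVec,
      J_mulVec_eL, J_mulVec_sv]
  rw [mul_assoc, hJW, mul_add, mul_add]
  -- now distribute (1 + r⊗eL + eR⊗s) * (J + (-eR)⊗r + (-S)⊗eR)
  rw [add_mul, add_mul, add_mul, add_mul, add_mul, add_mul]
  simp only [one_mul]
  have e1 : vecMulVec r (eV (Sum.inl k) : Idx n → R) * Jmat n R = vecMulVec r (eV (Sum.inr k)) := by
    rw [vecMulVec_mul_mat, eL_vecMul_J]
  have e2 : vecMulVec (eV (Sum.inr k) : Idx n → R) s * Jmat n R =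
      vecMulVec (eV (Sum.inr k)) (Sum.elim a b) := by
    rw [vecMulVec_mul_mat, sv_vecMul_J]
  have e3 : vecMulVec r (eV (Sum.inl k) : Idx n → R) * vecMulVec (-eV (Sum.inr k)) r = 0 := by
    rw [vecMulVec_mul_vecMulVec, eV_dot]; simp
  have e4 : vecMulVec r (eV (Sum.inl k) : Idx n → R) * vecMulVec (-Sum.elim a b) (eV (Sum.inr k)) = 0 := by
    rw [vecMulVec_mul_vecMulVec, eV_dot]; simp [ha]
  have e5 : vecMulVec (eV (Sum.inr k) : Idx n → R) s * vecMulVec (-eV (Sum.inr k)) r = 0 := by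
    rw [vecMulVec_mul_vecMulVec]
    have : s ⬝ᵥ (-eV (Sum.inr k)) = 0 := by rw [dotProduct_neg, dot_eV]; simp [hs, ha]
    rw [this, zero_smul]
  have e6 : vecMulVec (eV (Sum.inr k) : Idx n → R) s * vecMulVec (-Sum.elim a b) (eV (Sum.inr k)) = 0 := by
    rw [vecMulVec_mul_vecMulVec]
    have : s ⬝ᵥ (-Sum.elim a b) = 0 := by
      rw [dotProduct_neg, dot_split]
      simp [hs, sv, mul_comm]
    rw [this, zero_smul]
  rw [e1, e2, e3, e4, e5, e6]
  have cancel : vecMulVec (-eV (Sum.inr k) : Idx n → R) r + vecMulVec (-Sum.elim a b) (eV (Sum.inr k))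
      + vecMulVec r (eV (Sum.inr k)) + vecMulVec (eV (Sum.inr k)) (Sum.elim a b) = 0 := by
    rw [rv_sub_elim k a b c, ← hr]
    rw [vecMulVec_neg_left, vecMulVec_neg_left]
    have h8 : vecMulVec (r - c • eV (Sum.inr k)) (eV (Sum.inr k) : Idx n → R) =
        vecMulVec r (eV (Sum.inr k)) - c • vecMulVec (eV (Sum.inr k)) (eV (Sum.inr k)) := by
      ext p q; simp [vecMulVec_apply]; split <;> simp
    have h9 : vecMulVec (eV (Sum.inr k) : Idx n → R) (r - c • eV (Sum.inr k)) =
        vecMulVec (eV (Sum.inr k)) r - c • vecMulVec (eV (Sum.inr k)) (eV (Sum.inr k)) := by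
      ext p q; simp [vecMulVec_apply]; split <;> simp
    rw [h8, h9]
    abel
  -- final assembly
  have key : ∀ (J M1 M2 N1 N2 : Matrix (Idx n) (Idx n) R), N1 + N2 + M1 + M2 = 0 →
      J + M1 + M2 + (N1 + 0 + 0) + (N2 + 0 + 0) = J := by
    intro J M1 M2 N1 N2 h
    have : J + M1 + M2 + (N1 + 0 + 0) + (N2 + 0 + 0) = J + (N1 + N2 + M1 + M2) := by abel
    rw [this, h, add_zero]
  exact key _ _ _ _ _ cancel

lemma isSymp_Vmat (k : Fin n) (a b : Fin n → R) (c : R) (ha : a k = 0) :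
    IsSymp (Vmat k a b c) :=
  isSymp_transpose (isSymp_Umat k a b c ha)

end Sp
end Chunk3
section Chunk4
namespace Sp
open Matrix

variable {R : Type*} [CommRing R] {n : ℕ}

lemma stdBasisMatrix_transpose (p q : Idx n) :
    (Matrix.single p q (1:R))ᵀ = Matrix.single q p 1 := by
  ext i j; simp [Matrix.single, and_comm]

lemma Umat_gen1 (k j : Fin n) (t : R) :
    Umat k (Pi.single j t) 0 0 =
      1 + t • (Matrix.single (Sum.inl k) (Sum.inl j) 1 -
        Matrix.single (Sum.inr j) (Sum.inr k) 1) := by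
  ext p q
  cases p <;> cases q <;>
    simp [Umat, vecMulVec_apply, rv, sv, Matrix.single, Pi.single_apply, eq_comm] <;>
    split <;> simp_all <;> split <;> simp_all

lemma Umat_gen2 (k j : Fin n) (t : R) (hjk : j ≠ k) :
    Umat k 0 (Pi.single j t) 0 =
      1 + t • (Matrix.single (Sum.inl k) (Sum.inr j) 1 +
        Matrix.single (Sum.inl j) (Sum.inr k) 1) := by
  ext p q
  cases p <;> cases q <;>
    simp [Umat, vecMulVec_apply, rv, sv, Matrix.single, Pi.single_apply, eq_comm] <;>
    split <;> simp_all <;> split <;> simp_all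

lemma Umat_gen3 (k : Fin n) (c : R) :
    Umat k (0 : Fin n → R) 0 c = 1 + c • Matrix.single (Sum.inl k) (Sum.inr k) 1 := by
  ext p q
  cases p <;> cases q <;>
    simp [Umat, vecMulVec_apply, rv, sv, Matrix.single, Pi.single_apply, eq_comm] <;>
    split <;> simp_all <;> split <;> simp_all

lemma Umat_single_mem (k j : Fin n) (t : R) (hk : (k:ℕ) < j) :
    Umat k (Pi.single j t) 0 0 ∈ PosRootElems n R :=
  ⟨t, Or.inl ⟨k, j, hk, Umat_gen1 k j t⟩⟩

lemma Umat_single_mem2 (k j : Fin n) (t : R) (hk : (k:ℕ) < j) :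
    Umat k 0 (Pi.single j t) 0 ∈ PosRootElems n R :=
  ⟨t, Or.inr (Or.inl ⟨k, j, hk, Umat_gen2 k j t (by intro h; subst h; omega)⟩)⟩

lemma Umat_long_mem (k : Fin n) (c : R) :
    Umat k (0 : Fin n → R) 0 c ∈ PosRootElems n R :=
  ⟨c, Or.inr (Or.inr ⟨k, Umat_gen3 k c⟩)⟩

lemma Umat_mem_a (k : Fin n) :
    ∀ (s : Finset (Fin n)) (a : Fin n → R), (∀ j ∉ s, a j = 0) →
    (∀ j : Fin n, (j:ℕ) ≤ (k:ℕ) → a j = 0) →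
    Umat k a 0 0 ∈ Submonoid.closure (PosRootElems n R) := by
  intro s
  induction s using Finset.induction_on with
  | empty =>
    intro a h hl
    have : a = 0 := funext fun j => h j (by simp)
    rw [this, Umat_zero]
    exact Submonoid.one_mem _
  | @insert i s hi ih =>
    intro a h hl
    have hsplit : a = Pi.single i (a i) + Function.update a i 0 := by
      funext j
      by_cases hj : j = i
      · subst hj; simp [Pi.single_apply, Function.update]
      · simp [Pi.single_apply, hj, Function.update]
    have hk1 : (Pi.single i (a i) : Fin n → R) k = 0 := by
      by_cases hik : i = k
      · subst hik; simp [hl i le_rfl]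
      · simp [Pi.single_apply, Ne.symm hik, hik]
    have hmul : Umat k a 0 0 = Umat k (Pi.single i (a i)) 0 0 *
        Umat k (Function.update a i 0) 0 0 := by
      rw [Umat_mul k _ _ _ _ _ _ hk1 (by simp [Function.update, hl k le_rfl])]
      rw [← hsplit]
      norm_num
    rw [hmul]
    refine Submonoid.mul_mem _ ?_ (ih _ (fun j hj => ?_) (fun j hj => ?_))
    · by_cases hik : (k:ℕ) < (i:ℕ)
      · exact Submonoid.subset_closure (Umat_single_mem k i (a i) hik)
      · have : a i = 0 := hl i (by omega)
        rw [this]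
        have : (Pi.single i (0:R) : Fin n → R) = 0 := by funext j; simp [Pi.single_apply]
        rw [this, Umat_zero]
        exact Submonoid.one_mem _
    · by_cases hij : j = i
      · subst hij; simp [Function.update]
      · simp [Function.update, hij]
        exact h j (by simp [hij] at hj ⊢; tauto)
    · by_cases hij : j = i
      · subst hij; simp [Function.update]
      · simp [Function.update, hij, hl j hj]

lemma Umat_mem_b (k : Fin n) :
    ∀ (s : Finset (Fin n)) (b : Fin n → R), (∀ j ∉ s, b j = 0) →
    (∀ j : Fin n, (j:ℕ) ≤ (k:ℕ) → b j = 0) →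
    Umat k 0 b 0 ∈ Submonoid.closure (PosRootElems n R) := by
  intro s
  induction s using Finset.induction_on with
  | empty =>
    intro b h hl
    have : b = 0 := funext fun j => h j (by simp)
    rw [this, Umat_zero]
    exact Submonoid.one_mem _
  | @insert i s hi ih =>
    intro b h hl
    have hsplit : b = Pi.single i (b i) + Function.update b i 0 := by
      funext j
      by_cases hj : j = i
      · subst hj; simp [Pi.single_apply, Function.update]
      · simp [Pi.single_apply, hj, Function.update]
    have hmul : Umat k 0 b 0 = Umat k 0 (Pi.single i (b i)) 0 *
        Umat k 0 (Function.update b i 0) 0 := by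
      rw [Umat_mul k _ _ _ _ _ _ (by simp) (by simp)]
      rw [show (0:Fin n → R) + 0 = 0 by norm_num, ← hsplit]
      norm_num
    rw [hmul]
    refine Submonoid.mul_mem _ ?_ (ih _ (fun j hj => ?_) (fun j hj => ?_))
    · by_cases hik : (k:ℕ) < (i:ℕ)
      · exact Submonoid.subset_closure (Umat_single_mem2 k i (b i) hik)
      · have : b i = 0 := hl i (by omega)
        rw [this]
        have : (Pi.single i (0:R) : Fin n → R) = 0 := by funext j; simp [Pi.single_apply]
        rw [this, Umat_zero]
        exact Submonoid.one_mem _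
    · by_cases hij : j = i
      · subst hij; simp [Function.update]
      · simp [Function.update, hij]
        exact h j (by simp [hij] at hj ⊢; tauto)
    · by_cases hij : j = i
      · subst hij; simp [Function.update]
      · simp [Function.update, hij, hl j hj]

lemma Umat_mem (k : Fin n) (a b : Fin n → R) (c : R) (h : Pgood k a b) :
    Umat k a b c ∈ Submonoid.closure (PosRootElems n R) := by
  have h1 : Umat k a 0 0 * Umat k 0 b 0 = Umat k a b (∑ j, a j * b j) := by
    rw [Umat_mul k _ _ _ _ _ _ h.ak (by simp)]
    norm_num
  have h2 : Umat k a b (∑ j, a j * b j) * Umat k 0 0 (c - ∑ j, a j * b j) =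
      Umat k a b c := by
    rw [Umat_mul k _ _ _ _ _ _ h.ak (by simp)]
    norm_num
  rw [← h2, ← h1]
  exact Submonoid.mul_mem _
    (Submonoid.mul_mem _ (Umat_mem_a k Finset.univ a (by simp) h.1)
      (Umat_mem_b k Finset.univ b (by simp) h.2))
    (Submonoid.subset_closure (Umat_long_mem k _))

lemma transpose_mem_neg {M : Matrix (Idx n) (Idx n) R}
    (hM : M ∈ Submonoid.closure (PosRootElems n R)) :
    Mᵀ ∈ Submonoid.closure (NegRootElems n R) := by
  induction hM using Submonoid.closure_induction with
  | one => rw [transpose_one]; exact Submonoid.one_mem _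
  | mul x y hx hy ihx ihy =>
    rw [transpose_mul]
    exact Submonoid.mul_mem _ ihy ihx
  | mem x hx =>
    refine Submonoid.subset_closure ?_
    obtain ⟨t, h1 | h2 | h3⟩ := hx
    · obtain ⟨i, j, hij, rfl⟩ := h1
      refine ⟨t, Or.inl ⟨j, i, hij, ?_⟩⟩
      rw [transpose_add, transpose_one, transpose_smul, transpose_sub,
        stdBasisMatrix_transpose, stdBasisMatrix_transpose]
    · obtain ⟨i, j, hij, rfl⟩ := h2
      refine ⟨t, Or.inr (Or.inl ⟨i, j, hij, ?_⟩)⟩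
      rw [transpose_add, transpose_one, transpose_smul, transpose_add,
        stdBasisMatrix_transpose, stdBasisMatrix_transpose]
    · obtain ⟨i, rfl⟩ := h3
      refine ⟨t, Or.inr (Or.inr ⟨i, ?_⟩)⟩
      rw [transpose_add, transpose_one, transpose_smul, stdBasisMatrix_transpose]

lemma Vmat_mem (k : Fin n) (a b : Fin n → R) (c : R) (h : Pgood k a b) :
    Vmat k a b c ∈ Submonoid.closure (NegRootElems n R) :=
  transpose_mem_neg (Umat_mem k a b c h)

-- action lemmas
lemma Umat_mulVec (k : Fin n) (a b : Fin n → R) (c : R) (w : Idx n → R) :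
    Umat k a b c *ᵥ w =
      w + (rv k a b c ⬝ᵥ w) • eV (Sum.inl k) + w (Sum.inr k) • sv a b := by
  unfold Umat
  rw [add_mulVec, add_mulVec, one_mulVec, vecMulVec_mulVec, vecMulVec_mulVec, eV_dot]

lemma Vmat_transpose_form (k : Fin n) (a b : Fin n → R) (c : R) :
    Vmat k a b c = 1 + vecMulVec (rv k a b c) (eV (Sum.inl k)) +
      vecMulVec (eV (Sum.inr k)) (sv a b) := by
  unfold Vmat Umat
  rw [transpose_add, transpose_add, transpose_one, vecMulVec_transpose, vecMulVec_transpose]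

lemma Vmat_mulVec (k : Fin n) (a b : Fin n → R) (c : R) (w : Idx n → R) :
    Vmat k a b c *ᵥ w =
      w + w (Sum.inl k) • rv k a b c + (sv a b ⬝ᵥ w) • eV (Sum.inr k) := by
  rw [Vmat_transpose_form]
  rw [add_mulVec, add_mulVec, one_mulVec, vecMulVec_mulVec, vecMulVec_mulVec, eV_dot]

/-- supported on indices `≥ m` -/
def SuppGe (m : ℕ) (g : Matrix (Idx n) (Idx n) R) : Prop :=
  ∀ p q : Idx n, (idx p < m ∨ idx q < m) → g p q = (1 : Matrix (Idx n) (Idx n) R) p q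

lemma suppGe_one (m : ℕ) : SuppGe m (1 : Matrix (Idx n) (Idx n) R) := fun _ _ _ => rfl

lemma suppGe_mono {m m' : ℕ} (h : m' ≤ m) {g : Matrix (Idx n) (Idx n) R}
    (hg : SuppGe m g) : SuppGe m' g :=
  fun p q hpq => hg p q (by omega)

lemma suppGe_mul {m : ℕ} {g h : Matrix (Idx n) (Idx n) R}
    (hg : SuppGe m g) (hh : SuppGe m h) : SuppGe m (g * h) := by
  intro p q hpq
  rcases hpq with hp | hq
  · rw [mul_apply]
    have : ∀ r, g p r * h r q = (if p = r then 1 else 0) * h r q := by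
      intro r
      rw [hg p r (Or.inl hp), one_apply]
    rw [Finset.sum_congr rfl fun r _ => this r]
    simp [ite_mul, Finset.sum_ite_eq]
    exact hh p q (Or.inl hp)
  · rw [mul_apply]
    have : ∀ r, g p r * h r q = g p r * (if r = q then 1 else 0) := by
      intro r
      rw [hh r q (Or.inr hq), one_apply]
    rw [Finset.sum_congr rfl fun r _ => this r]
    simp [mul_ite, Finset.sum_ite_eq']
    exact hg p q (Or.inr hq)

lemma suppGe_Umat (k : Fin n) (a b : Fin n → R) (c : R) (h : Pgood k a b) :
    SuppGe (k:ℕ) (Umat k a b c) := by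
  intro p q hpq
  have h1 : vecMulVec (eV (Sum.inl k) : Idx n → R) (rv k a b c) p q = 0 := by
    rcases hpq with hp | hq
    · have hne : p ≠ Sum.inl k := by
        intro hh; subst hh; simp only [idx_inl] at hp; omega
      rw [vecMulVec_apply, eV_apply, if_neg hne, zero_mul]
    · have hz : rv k a b c q = 0 := by
        cases q with
        | inl j =>
          have : (j:ℕ) < (k:ℕ) := by simpa only [idx_inl] using hq
          simp [rv, h.1 j (le_of_lt this)]
        | inr j =>
          have hj : (j:ℕ) < (k:ℕ) := by simpa only [idx_inr] using hq
          have hne : j ≠ k := fun hh => by subst hh; omega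
          simp [rv, hne, h.2 j (le_of_lt hj)]
      rw [vecMulVec_apply, hz, mul_zero]
  have h2 : vecMulVec (sv a b) (eV (Sum.inr k) : Idx n → R) p q = 0 := by
    rcases hpq with hp | hq
    · have hz : sv a b p = 0 := by
        cases p with
        | inl j =>
          have : (j:ℕ) < (k:ℕ) := by simpa only [idx_inl] using hp
          simp [sv, h.2 j (le_of_lt this)]
        | inr j =>
          have : (j:ℕ) < (k:ℕ) := by simpa only [idx_inr] using hp
          simp [sv, h.1 j (le_of_lt this)]
      rw [vecMulVec_apply, hz, zero_mul]
    · have hne : q ≠ Sum.inr k := by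
        intro hh; subst hh; simp only [idx_inr] at hq; omega
      rw [vecMulVec_apply, eV_apply, if_neg hne, mul_zero]
  unfold Umat
  rw [Matrix.add_apply, Matrix.add_apply, h1, h2, add_zero, add_zero]

lemma suppGe_Vmat (k : Fin n) (a b : Fin n → R) (c : R) (h : Pgood k a b) :
    SuppGe (k:ℕ) (Vmat k a b c) := by
  intro p q hpq
  have := suppGe_Umat k a b c h q p (by tauto)
  rw [Vmat, transpose_apply, this, one_apply, one_apply]
  simp [eq_comm]

lemma suppGe_fix_col {m : ℕ} {g : Matrix (Idx n) (Idx n) R} (hg : SuppGe m g)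
    {p : Idx n} (hp : idx p < m) : g *ᵥ eV p = eV p := by
  funext q
  rw [eV, mulVec_single_one]
  simp only [col_apply]
  rw [hg q p (Or.inr hp), one_apply]
  simp [Pi.single_apply]

lemma suppGe_fix_row {m : ℕ} {g : Matrix (Idx n) (Idx n) R} (hg : SuppGe m g)
    {p : Idx n} (hp : idx p < m) : eV p ᵥ* g = eV p := by
  funext q
  rw [eV, single_one_vecMul]
  simp only [row_apply]
  rw [hg p q (Or.inl hp), one_apply]
  simp [Pi.single_apply, eq_comm]

end Sp
end Chunk4
section Chunk5
namespace Sp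
open Matrix

variable {R : Type*} [CommRing R] {n : ℕ}

lemma suppGe_vecMul_apply {m : ℕ} {g : Matrix (Idx n) (Idx n) R} (hg : SuppGe m g)
    {q : Idx n} (hq : idx q < m) (w : Idx n → R) : (w ᵥ* g) q = w q := by
  unfold vecMul dotProduct
  have : ∀ p, w p * g p q = w p * (if p = q then 1 else 0) := fun p => by
    rw [hg p q (Or.inr hq), one_apply]
  rw [Finset.sum_congr rfl fun p _ => this p]
  simp [mul_ite, Finset.sum_ite_eq']

lemma J_mulVec_elim (x y : Fin n → R) :
    Jmat n R *ᵥ Sum.elim x y = sv x y := by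
  rw [Jmat_mulVec]; funext p; cases p <;> simp [sv]

lemma J_mulVec_sv' (x y : Fin n → R) :
    Jmat n R *ᵥ sv x y = -Sum.elim x y := by
  rw [← J_mulVec_elim, mulVec_mulVec, Jmat_mul_Jmat, neg_mulVec, one_mulVec]

lemma rv_eq_elim_add (k : Fin n) (a b : Fin n → R) (c : R) :
    rv k a b c = Sum.elim a b + c • eV (Sum.inr k) := rfl

/-- moving an element supported on indices `> k` past an upper `k`-unipotent -/
lemma Umat_swap (k : Fin n) {g : Matrix (Idx n) (Idx n) R}
    (hsymp : IsSymp g) (hsupp : SuppGe ((k:ℕ)+1) g)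
    (a b : Fin n → R) (c : R) (h : Pgood k a b) :
    ∃ a' b' : Fin n → R, ∃ c' : R, Pgood k a' b' ∧
      Umat k a b c * g = g * Umat k a' b' c' := by
  set r := rv k a b c with hr
  set r' := r ᵥ* g with hr'
  refine ⟨fun j => r' (Sum.inl j), fun j => if j = k then 0 else r' (Sum.inr j), c, ?_, ?_⟩
  · constructor
    · intro j hj
      have : (r ᵥ* g) (Sum.inl j) = r (Sum.inl j) :=
        suppGe_vecMul_apply hsupp (by simp [idx]; omega) r
      simp only [hr']
      rw [this]
      simp [hr, rv, h.1 j hj]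
    · intro j hj
      by_cases hjk : j = k
      · subst hjk; simp
      · have : (r ᵥ* g) (Sum.inr j) = r (Sum.inr j) :=
          suppGe_vecMul_apply hsupp (by simp [idx]; omega) r
        simp only [hr', hjk, if_neg hjk]
        rw [this]
        simp [hr, rv, hjk, h.2 j hj]
  · set a' : Fin n → R := fun j => r' (Sum.inl j) with ha'
    set b' : Fin n → R := fun j => if j = k then 0 else r' (Sum.inr j) with hb'
    have hgeL : g *ᵥ eV (Sum.inl k) = eV (Sum.inl k) :=
      suppGe_fix_col hsupp (by simp [idx])
    have hgeR : g *ᵥ eV (Sum.inr k) = eV (Sum.inr k) :=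
      suppGe_fix_col hsupp (by simp [idx])
    have hgeRrow : (eV (Sum.inr k) : Idx n → R) ᵥ* g = eV (Sum.inr k) :=
      suppGe_fix_row hsupp (by simp [idx])
    have hrrk : r (Sum.inr k) = c := by simp [hr, rv, h.bk]
    have hr'rk : r' (Sum.inr k) = c := by
      rw [hr', suppGe_vecMul_apply hsupp (by simp [idx]) r, hrrk]
    -- key : rv of new params is r'
    have hrv' : rv k a' b' c = r' := by
      funext p
      cases p with
      | inl j => simp [rv, ha']
      | inr j =>
        by_cases hjk : j = k
        · subst hjk; simp [rv, hb', hr'rk]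
        · simp [rv, hb', hjk]
    -- elim of new params
    have helim : Sum.elim a' b' = gᵀ *ᵥ Sum.elim a b := by
      have h1 : Sum.elim a' b' = r' - c • eV (Sum.inr k) := by
        funext p
        cases p with
        | inl j => simp [ha']
        | inr j =>
          by_cases hjk : j = k
          · subst hjk; simp [hb', hr'rk]
          · simp [hb', hjk]
      have h2 : gᵀ *ᵥ r = r' := by rw [mulVec_transpose]
      have h3 : gᵀ *ᵥ eV (Sum.inr k) = eV (Sum.inr k) := by
        rw [mulVec_transpose, hgeRrow]
      have h4 : gᵀ *ᵥ Sum.elim a b = gᵀ *ᵥ r - c • (gᵀ *ᵥ eV (Sum.inr k)) := by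
        rw [hr, rv_eq_elim_add]
        rw [show Sum.elim a b = (Sum.elim a b + c • eV (Sum.inr k)) - c • eV (Sum.inr k) by abel]
        rw [mulVec_sub, mulVec_smul]
        abel_nf
      rw [h4, h2, h3, h1]
    -- key : g maps new sv to old sv
    have hsv : g *ᵥ sv a' b' = sv a b := by
      have : sv a' b' = Jmat n R *ᵥ (gᵀ *ᵥ Sum.elim a b) := by
        rw [← helim, J_mulVec_elim]
      rw [this, mulVec_mulVec, mulVec_mulVec, isSymp_JJt hsymp, J_mulVec_elim]
    -- final computation
    unfold Umat
    rw [add_mul, add_mul, one_mul, mul_add, mul_add, mul_one]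
    rw [vecMulVec_mul_mat, vecMulVec_mul_mat, hgeRrow]
    rw [mat_mul_vecMulVec, mat_mul_vecMulVec, hgeL, hsv, hrv', ← hr']

/-- moving an element supported on indices `> k` past a lower `k`-unipotent -/
lemma Vmat_swap (k : Fin n) {g : Matrix (Idx n) (Idx n) R}
    (hsymp : IsSymp g) (hsupp : SuppGe ((k:ℕ)+1) g)
    (a b : Fin n → R) (c : R) (h : Pgood k a b) :
    ∃ a' b' : Fin n → R, ∃ c' : R, Pgood k a' b' ∧
      Vmat k a b c * g = g * Vmat k a' b' c' := by
  set s := sv a b with hs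
  set s' := s ᵥ* g with hs'
  refine ⟨fun j => if j = k then 0 else -s' (Sum.inr j),
    fun j => if j = k then 0 else s' (Sum.inl j), c, ?_, ?_⟩
  · constructor
    · intro j hj
      by_cases hjk : j = k
      · subst hjk; simp
      · have : (s ᵥ* g) (Sum.inr j) = s (Sum.inr j) :=
          suppGe_vecMul_apply hsupp (by simp [idx]; omega) s
        simp only [hs', if_neg hjk]
        rw [this]
        simp [hs, sv, h.1 j hj]
    · intro j hj
      by_cases hjk : j = k
      · subst hjk; simp
      · have : (s ᵥ* g) (Sum.inl j) = s (Sum.inl j) :=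
          suppGe_vecMul_apply hsupp (by simp [idx]; omega) s
        simp only [hs', if_neg hjk]
        rw [this]
        simp [hs, sv, h.2 j hj]
  · set a' : Fin n → R := fun j => if j = k then 0 else -s' (Sum.inr j) with ha'
    set b' : Fin n → R := fun j => if j = k then 0 else s' (Sum.inl j) with hb'
    have hgeR : g *ᵥ eV (Sum.inr k) = eV (Sum.inr k) :=
      suppGe_fix_col hsupp (by simp [idx])
    have hgeLrow : (eV (Sum.inl k) : Idx n → R) ᵥ* g = eV (Sum.inl k) :=
      suppGe_fix_row hsupp (by simp [idx])
    have hs'lk : s' (Sum.inl k) = 0 := by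
      rw [hs', suppGe_vecMul_apply hsupp (by simp [idx]) s]
      simp [hs, sv, h.bk]
    have hs'rk : s' (Sum.inr k) = 0 := by
      rw [hs', suppGe_vecMul_apply hsupp (by simp [idx]) s]
      simp [hs, sv, h.ak]
    have hsv' : sv a' b' = s' := by
      funext p
      cases p with
      | inl j =>
        by_cases hjk : j = k
        · subst hjk; simp [sv, hb', hs'lk]
        · simp [sv, hb', hjk]
      | inr j =>
        by_cases hjk : j = k
        · subst hjk; simp [sv, ha', hs'rk]
        · simp [sv, ha', hjk]
    have hrv' : g *ᵥ rv k a' b' c = rv k a b c := by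
      have h1 : Sum.elim a' b' = -(Jmat n R *ᵥ sv a' b') := by
        rw [J_mulVec_sv', neg_neg]
      have h2 : g *ᵥ rv k a' b' c = -(g *ᵥ (Jmat n R *ᵥ (gᵀ *ᵥ s))) + c • (g *ᵥ eV (Sum.inr k)) := by
        rw [rv_eq_elim_add, h1, hsv', hs', ← mulVec_transpose]
        rw [mulVec_add, mulVec_neg, mulVec_smul]
      rw [h2, mulVec_mulVec, mulVec_mulVec, isSymp_JJt hsymp, hgeR]
      rw [hs, J_mulVec_sv']
      rw [rv_eq_elim_add]
      abel
    -- final computation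
    rw [Vmat_transpose_form, Vmat_transpose_form]
    rw [add_mul, add_mul, one_mul, mul_add, mul_add, mul_one]
    rw [vecMulVec_mul_mat, vecMulVec_mul_mat, hgeLrow, ← hs', hsv']
    rw [mat_mul_vecMulVec, mat_mul_vecMulVec, hgeR, hrv']

end Sp
end Chunk5
section Chunk6
namespace Sp

variable {R : Type*} [CommRing R] {ι : Type*} [DecidableEq ι]

lemma span_extract {s : Finset ι} {v : ι → R} {x : R}
    (hx : x ∈ Ideal.span (v '' ↑s : Set R)) :
    ∃ μ : ι → R, x = ∑ i ∈ s, μ i * v i := by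
  induction hx using Submodule.span_induction with
  | mem a ha =>
    obtain ⟨i, hi, rfl⟩ := ha
    refine ⟨fun j => if j = i then 1 else 0, ?_⟩
    simp only [ite_mul, one_mul, zero_mul]
    rw [Finset.sum_ite_eq' s i v]
    simp only [Finset.mem_coe] at hi
    simp [hi]
  | zero => exact ⟨0, by simp⟩
  | add x y hx hy ihx ihy =>
    obtain ⟨μ, rfl⟩ := ihx
    obtain ⟨ν, rfl⟩ := ihy
    exact ⟨μ + ν, by rw [← Finset.sum_add_distrib]; simp [add_mul]⟩
  | smul r x hx ih =>
    obtain ⟨μ, rfl⟩ := ih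
    refine ⟨fun i => r * μ i, ?_⟩
    rw [smul_eq_mul, Finset.mul_sum]
    simp [mul_assoc]

lemma mem_image_span {s : Finset ι} {v : ι → R} {i : ι} (hi : i ∈ s) :
    v i ∈ Ideal.span (v '' ↑s : Set R) :=
  Ideal.subset_span ⟨i, by simpa using hi, rfl⟩

lemma shorten_aux
    (hSR2 : ∀ v₀ v₁ v₂ : R, Ideal.span {v₀, v₁, v₂} = ⊤ →
      ∃ t₁ t₂ : R, Ideal.span {v₁ + t₁ * v₀, v₂ + t₂ * v₀} = ⊤) :
    ∀ (m : ℕ) (s : Finset ι) (v : ι → R) (z : R), s.card = m + 2 →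
      Ideal.span (insert z (v '' ↑s) : Set R) = ⊤ →
      ∃ t : ι → R, Ideal.span ((fun i => v i + t i * z) '' ↑s : Set R) = ⊤ := by
  intro m
  induction m with
  | zero =>
    intro s v z hcard hspan
    obtain ⟨i, j, hij, rfl⟩ := Finset.card_eq_two.mp hcard
    have himg : (v '' ↑({i, j} : Finset ι) : Set R) = {v i, v j} := by
      rw [Finset.coe_insert, Finset.coe_singleton, Set.image_insert_eq, Set.image_singleton]
    rw [himg] at hspan
    obtain ⟨t₁, t₂, hspan2⟩ := hSR2 z (v i) (v j) hspan
    refine ⟨fun p => if p = i then t₁ else t₂, ?_⟩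
    have himg2 : ((fun p => v p + (if p = i then t₁ else t₂) * z) '' ↑({i, j} : Finset ι) : Set R) =
        {v i + t₁ * z, v j + t₂ * z} := by
      rw [Finset.coe_insert, Finset.coe_singleton, Set.image_insert_eq, Set.image_singleton]
      simp [hij, Ne.symm hij]
    rw [himg2]
    exact hspan2
  | succ m ih =>
    intro s v z hcard hspan
    have hne : s.Nonempty := Finset.card_pos.mp (by omega)
    obtain ⟨x₀, hx₀⟩ := hne
    set s₀ := s.erase x₀ with hs₀
    have hcard₀ : s₀.card = m + 2 := by
      rw [hs₀, Finset.card_erase_of_mem hx₀]; omega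
    have hone : (1 : R) ∈ Ideal.span (insert z (v '' ↑s) : Set R) := by
      rw [hspan]; trivial
    rw [Ideal.mem_span_insert] at hone
    obtain ⟨aco, z', hz', hrep⟩ := hone
    obtain ⟨μ, hμ⟩ := span_extract hz'
    have hsum : ∑ i ∈ s, μ i * v i = μ x₀ * v x₀ + ∑ i ∈ s₀, μ i * v i := by
      rw [hs₀, ← Finset.add_sum_erase _ _ hx₀]
    set d := aco * z + μ x₀ * v x₀ with hd
    have hspan₀ : Ideal.span (insert d (v '' ↑s₀) : Set R) = ⊤ := by
      rw [Ideal.eq_top_iff_one, Ideal.mem_span_insert]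
      refine ⟨1, ∑ i ∈ s₀, μ i * v i, ?_, ?_⟩
      · exact Ideal.sum_mem _ fun i hi => Ideal.mul_mem_left _ _ (mem_image_span hi)
      · rw [one_mul, hd]
        calc (1:R) = aco * z + z' := hrep
          _ = aco * z + (μ x₀ * v x₀ + ∑ i ∈ s₀, μ i * v i) := by rw [hμ, hsum]
          _ = aco * z + μ x₀ * v x₀ + ∑ i ∈ s₀, μ i * v i := by ring
    obtain ⟨t, hts⟩ := ih s₀ v d hcard₀ hspan₀
    refine ⟨fun i => if i = x₀ then 0 else t i * aco, ?_⟩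
    rw [eq_top_iff, ← hts]
    apply Ideal.span_le.mpr
    intro w hw
    obtain ⟨i, hi, rfl⟩ := hw
    simp only [Finset.mem_coe] at hi
    have hix₀ : i ≠ x₀ := Finset.ne_of_mem_erase hi
    have his : i ∈ s := Finset.mem_of_mem_erase hi
    have hmem1 : v i + (t i * aco) * z ∈
        Ideal.span ((fun p => v p + (if p = x₀ then 0 else t p * aco) * z) '' ↑s : Set R) := by
      have := mem_image_span (v := fun p => v p + (if p = x₀ then 0 else t p * aco) * z) his
      simpa only [if_neg hix₀] using this
    have hmem2 : v x₀ ∈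
        Ideal.span ((fun p => v p + (if p = x₀ then 0 else t p * aco) * z) '' ↑s : Set R) := by
      have := mem_image_span (v := fun p => v p + (if p = x₀ then 0 else t p * aco) * z) hx₀
      simpa using this
    have heq : v i + t i * d = (v i + (t i * aco) * z) + (t i * μ x₀) * v x₀ := by
      rw [hd]; ring
    simp only [SetLike.mem_coe]
    show v i + t i * d ∈ _
    rw [heq]
    exact Ideal.add_mem _ hmem1 (Ideal.mul_mem_left _ _ hmem2)

lemma shorten
    (hSR2 : ∀ v₀ v₁ v₂ : R, Ideal.span {v₀, v₁, v₂} = ⊤ →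
      ∃ t₁ t₂ : R, Ideal.span {v₁ + t₁ * v₀, v₂ + t₂ * v₀} = ⊤)
    (s : Finset ι) (v : ι → R) (z : R) (hcard : 2 ≤ s.card)
    (hspan : Ideal.span (insert z (v '' ↑s) : Set R) = ⊤) :
    ∃ t : ι → R, Ideal.span ((fun i => v i + t i * z) '' ↑s : Set R) = ⊤ :=
  shorten_aux hSR2 (s.card - 2) s v z (by omega) hspan

end Sp
end Chunk6
section Chunk7
namespace Sp
open Matrix

variable {R : Type*} [CommRing R] {n : ℕ}

lemma J_mulVec_eR (k : Fin n) : Jmat n R *ᵥ eV (Sum.inr k) = eV (Sum.inl k) := by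
  rw [Jmat_mulVec]; funext p; cases p <;> simp [eq_comm]

lemma entry_of_fix_row {A : Matrix (Idx n) (Idx n) R} {p : Idx n}
    (h : eV p ᵥ* A = eV p) (q : Idx n) : A p q = if q = p then 1 else 0 := by
  have := congrFun h q
  rw [eV, single_vecMul] at this
  simpa [Pi.single_apply] using this

lemma isSymp_key {A : Matrix (Idx n) (Idx n) R} (hA : IsSymp A) (v : Idx n → R) :
    Aᵀ *ᵥ (Jmat n R *ᵥ (A *ᵥ v)) = Jmat n R *ᵥ v := by
  rw [mulVec_mulVec, mulVec_mulVec, hA]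

lemma fix_row_inl {A : Matrix (Idx n) (Idx n) R} (hA : IsSymp A) {i : Fin n}
    (hr : A *ᵥ eV (Sum.inr i) = eV (Sum.inr i)) :
    eV (Sum.inl i) ᵥ* A = eV (Sum.inl i) := by
  have := isSymp_key hA (eV (Sum.inr i))
  rw [hr, J_mulVec_eR, mulVec_transpose] at this
  exact this

lemma fix_row_inr {A : Matrix (Idx n) (Idx n) R} (hA : IsSymp A) {i : Fin n}
    (hl : A *ᵥ eV (Sum.inl i) = eV (Sum.inl i)) :
    eV (Sum.inr i) ᵥ* A = eV (Sum.inr i) := by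
  have h := isSymp_key hA (eV (Sum.inl i))
  rw [hl, J_mulVec_eL, mulVec_neg, mulVec_transpose] at h
  exact neg_injective h

lemma fix_rows {A : Matrix (Idx n) (Idx n) R} (hA : IsSymp A) {m : ℕ}
    (hfix : ∀ p : Idx n, idx p < m → A *ᵥ eV p = eV p) :
    ∀ p : Idx n, idx p < m → eV p ᵥ* A = eV p := by
  intro p hp
  cases p with
  | inl i => exact fix_row_inl hA (hfix (Sum.inr i) (by simpa [idx] using hp))
  | inr i => exact fix_row_inr hA (hfix (Sum.inl i) (by simpa [idx] using hp))

lemma Umat_mulVec_apply (k : Fin n) (a b : Fin n → R) (c : R) (w : Idx n → R) (p : Idx n) :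
    (Umat k a b c *ᵥ w) p =
      w p + (rv k a b c ⬝ᵥ w) * eV (Sum.inl k) p + w (Sum.inr k) * sv a b p := by
  rw [Umat_mulVec]
  simp [smul_eq_mul]

lemma Vmat_mulVec_apply (k : Fin n) (a b : Fin n → R) (c : R) (w : Idx n → R) (p : Idx n) :
    (Vmat k a b c *ᵥ w) p =
      w p + w (Sum.inl k) * rv k a b c p + (sv a b ⬝ᵥ w) * eV (Sum.inr k) p := by
  rw [Vmat_mulVec]
  simp [smul_eq_mul]

lemma Umat_fix_low (k : Fin n) (a b : Fin n → R) (c : R) (h : Pgood k a b)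
    {p : Idx n} (hp : idx p < (k:ℕ)) : Umat k a b c *ᵥ eV p = eV p := by
  funext q
  rw [Umat_mulVec_apply]
  have h1 : eV p (Sum.inr k) = (0:R) := by
    rw [eV_apply, if_neg]; intro hh; subst hh; simp [idx] at hp
  have h2 : rv k a b c ⬝ᵥ (eV p : Idx n → R) = 0 := by
    rw [dot_eV]
    cases p with
    | inl j => simpa [idx] using h.1 j (by simp [idx] at hp; omega)
    | inr j =>
      have hj : (j:ℕ) < (k:ℕ) := by simpa [idx] using hp
      have : j ≠ k := fun hh => by subst hh; omega
      simp [rv, this, h.2 j (by omega)]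
  rw [h1, h2]
  ring

lemma Vmat_fix_low (k : Fin n) (a b : Fin n → R) (c : R) (h : Pgood k a b)
    {p : Idx n} (hp : idx p < (k:ℕ)) : Vmat k a b c *ᵥ eV p = eV p := by
  funext q
  rw [Vmat_mulVec_apply]
  have h1 : eV p (Sum.inl k) = (0:R) := by
    rw [eV_apply, if_neg]; intro hh; subst hh; simp [idx] at hp
  have h2 : sv a b ⬝ᵥ (eV p : Idx n → R) = 0 := by
    rw [dot_eV]
    cases p with
    | inl j => simpa [sv] using h.2 j (by simp [idx] at hp; omega)
    | inr j => simpa [sv] using h.1 j (by simp [idx] at hp; omega)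
  rw [h1, h2]
  ring

/-- the pairing is preserved by symplectic matrices -/
lemma pairing_invariant {A : Matrix (Idx n) (Idx n) R} (hA : IsSymp A) (u v : Idx n → R) :
    (A *ᵥ u) ⬝ᵥ (Jmat n R *ᵥ (A *ᵥ v)) = u ⬝ᵥ (Jmat n R *ᵥ v) := by
  rw [mulVec_mulVec]
  rw [dotProduct_mulVec]
  have h1 : A *ᵥ u = u ᵥ* Aᵀ := by rw [← mulVec_transpose, transpose_transpose]
  rw [h1, vecMul_vecMul]
  have h2 : Aᵀ * (Jmat n R * A) = Jmat n R := by rw [← mul_assoc, hA]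
  rw [h2, ← dotProduct_mulVec]

/-- realize any element of the span of the entries of `w` over the support
as a `Vmat` rk-increment -/
lemma span_realize (k : Fin n) (w : Idx n → R) {x : R}
    (hx : x ∈ Ideal.span (w '' ↑(Finset.univ.filter
      (fun p : Idx n => (k:ℕ) ≤ idx p ∧ p ≠ Sum.inr k)) : Set R)) :
    ∃ a b : Fin n → R, ∃ c : R, Pgood k a b ∧
      w (Sum.inl k) * c + sv a b ⬝ᵥ w = x := by
  induction hx using Submodule.span_induction with
  | mem u hu =>
    obtain ⟨p, hp, rfl⟩ := hu
    simp only [Finset.coe_filter, Set.mem_setOf_eq, Finset.mem_univ, true_and] at hp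
    obtain ⟨hpk, hpne⟩ := hp
    cases p with
    | inl j =>
      by_cases hjk : j = k
      · subst hjk
        refine ⟨0, 0, 1, ⟨by simp, by simp⟩, ?_⟩
        rw [sv_zero, zero_dotProduct]; ring
      · refine ⟨0, Pi.single j 1, 0, ⟨by simp, ?_⟩, ?_⟩
        · intro i hi
          rw [Pi.single_apply, if_neg]
          intro hh; subst hh
          simp [idx] at hpk; omega
        · rw [sv_dot]
          simp [Pi.single_apply, ite_mul, Finset.sum_ite_eq']
    | inr j =>
      have hjk : j ≠ k := fun hh => by subst hh; exact hpne rfl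
      refine ⟨Pi.single j (-1), 0, 0, ⟨?_, by simp⟩, ?_⟩
      · intro i hi
        rw [Pi.single_apply, if_neg]
        intro hh; subst hh
        simp [idx] at hpk; omega
      · rw [sv_dot]
        simp [Pi.single_apply, ite_mul, Finset.sum_ite_eq']
  | zero => exact ⟨0, 0, 0, ⟨by simp, by simp⟩, by rw [sv_zero, zero_dotProduct]; ring⟩
  | add u v hu hv ihu ihv =>
    obtain ⟨a, b, c, hg, he⟩ := ihu
    obtain ⟨a', b', c', hg', he'⟩ := ihv
    refine ⟨a + a', b + b', c + c', ⟨?_, ?_⟩, ?_⟩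
    · intro i hi; simp [hg.1 i hi, hg'.1 i hi]
    · intro i hi; simp [hg.2 i hi, hg'.2 i hi]
    · rw [sv_add, add_dotProduct, ← he, ← he']; ring
  | smul r u hu ih =>
    obtain ⟨a, b, c, hg, he⟩ := ih
    refine ⟨r • a, r • b, r * c, ⟨?_, ?_⟩, ?_⟩
    · intro i hi; simp [hg.1 i hi]
    · intro i hi; simp [hg.2 i hi]
    · have hsv : sv (r • a) (r • b) = r • sv a b := by
        funext p; cases p <;> simp [sv, smul_eq_mul, mul_comm]
      rw [hsv, smul_dotProduct, ← he, smul_eq_mul, smul_eq_mul]; ring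

end Sp
end Chunk7
section Chunk8
namespace Sp
open Matrix

variable {R : Type*} [CommRing R] {n : ℕ}

lemma Pgood.neg {k : Fin n} {a b : Fin n → R} (h : Pgood k a b) : Pgood k (-a) (-b) :=
  ⟨fun j hj => by simp [h.1 j hj], fun j hj => by simp [h.2 j hj]⟩

lemma Umat_low_entry (k : Fin n) (a b : Fin n → R) (c : R) (h : Pgood k a b)
    {p : Idx n} (hp : idx p < (k:ℕ)) (w : Idx n → R) :
    (Umat k a b c *ᵥ w) p = w p := by
  rw [Umat_mulVec_apply]
  have h1 : eV (Sum.inl k) p = (0:R) := by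
    rw [eV_apply, if_neg]; intro hh; subst hh; simp [idx] at hp
  have h2 : sv a b p = 0 := by
    cases p with
    | inl j => simpa [sv] using h.2 j (by simp [idx] at hp; omega)
    | inr j => simpa [sv] using h.1 j (by simp [idx] at hp; omega)
  rw [h1, h2]; ring

lemma Vmat_low_entry (k : Fin n) (a b : Fin n → R) (c : R) (h : Pgood k a b)
    {p : Idx n} (hp : idx p < (k:ℕ)) (w : Idx n → R) :
    (Vmat k a b c *ᵥ w) p = w p := by
  rw [Vmat_mulVec_apply]
  have h1 : eV (Sum.inr k) p = (0:R) := by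
    rw [eV_apply, if_neg]; intro hh; subst hh; simp [idx] at hp
  have h2 : rv k a b c p = 0 := by
    cases p with
    | inl j => simpa [rv] using h.1 j (by simp [idx] at hp; omega)
    | inr j =>
      have hj : (j:ℕ) < (k:ℕ) := by simpa [idx] using hp
      have hne : j ≠ k := fun hh => by subst hh; omega
      simp [rv, hne, h.2 j (by omega)]
  rw [h1, h2]; ring

lemma Vmat_mul_neg (k : Fin n) (a b : Fin n → R) (c : R) (ha : a k = 0) :
    Vmat k (-a) (-b) (-c) * Vmat k a b c = 1 := by
  have h := Umat_mul_neg k a b c ha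
  have := congrArg Matrix.transpose h
  rwa [transpose_mul, transpose_one] at this

lemma Umat_neg_mul (k : Fin n) (a b : Fin n → R) (c : R) (ha : a k = 0) :
    Umat k (-a) (-b) (-c) * Umat k a b c = 1 := by
  have h := Umat_mul_neg k (-a) (-b) (-c) (by simp [ha])
  simpa using h

/-- The key one-pair reduction step. -/
lemma step
    (hSR2 : ∀ v₀ v₁ v₂ : R, Ideal.span {v₀, v₁, v₂} = ⊤ →
      ∃ t₁ t₂ : R, Ideal.span {v₁ + t₁ * v₀, v₂ + t₂ * v₀} = ⊤)
    (k : Fin n) (hk3 : (k:ℕ) + 3 ≤ n)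
    {A : Matrix (Idx n) (Idx n) R} (hA : IsSymp A)
    (hfix : ∀ p : Idx n, idx p < (k:ℕ) → A *ᵥ eV p = eV p) :
    ∃ (a₁ b₁ : Fin n → R) (c₁ : R) (a₂ b₂ : Fin n → R) (c₂ : R)
      (a₃ b₃ : Fin n → R) (c₃ : R) (a₄ b₄ : Fin n → R) (c₄ : R)
      (A' : Matrix (Idx n) (Idx n) R),
      Pgood k a₁ b₁ ∧ Pgood k a₂ b₂ ∧ Pgood k a₃ b₃ ∧ Pgood k a₄ b₄ ∧
      IsSymp A' ∧ (∀ p : Idx n, idx p < (k:ℕ)+1 → A' *ᵥ eV p = eV p) ∧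
      A = Umat k a₁ b₁ c₁ * (Vmat k a₂ b₂ c₂ *
        (Umat k a₃ b₃ c₃ * (Vmat k a₄ b₄ c₄ * A'))) := by
  classical
  set S : Finset (Idx n) :=
    Finset.univ.filter (fun p : Idx n => (k:ℕ) ≤ idx p ∧ p ≠ Sum.inr k) with hS
  have hmemS : ∀ p : Idx n, p ∈ S ↔ ((k:ℕ) ≤ idx p ∧ p ≠ Sum.inr k) := by
    intro p; rw [hS, Finset.mem_filter]; simp
  set y := A *ᵥ eV (Sum.inr k) with hy
  have hrow := fix_rows hA hfix
  have hy0 : ∀ p : Idx n, idx p < (k:ℕ) → y p = 0 := by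
    intro p hp
    rw [hy, eV, mulVec_single]
    show A p (Sum.inr k) * 1 = 0
    rw [entry_of_fix_row (hrow p hp) (Sum.inr k), if_neg, zero_mul]
    intro hh; subst hh; simp [idx] at hp
  -- cardinality
  have hcard : 2 ≤ S.card := by
    have h1 : Sum.inl k ∈ S := (hmemS _).mpr ⟨le_refl _, by simp⟩
    have h2 : Sum.inl (⟨(k:ℕ)+1, by omega⟩ : Fin n) ∈ S :=
      (hmemS _).mpr ⟨by simp [idx], by simp⟩
    have : 1 < S.card := Finset.one_lt_card.mpr
      ⟨_, h1, _, h2, by simp [Fin.ext_iff]⟩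
    omega
  -- unimodularity of the column y over the support
  have hBinv := isSymp_mul_left_inv hA
  have hyspan : Ideal.span (insert (y (Sum.inr k)) (y '' ↑S) : Set R) = ⊤ := by
    rw [Ideal.eq_top_iff_one]
    have h1 : (-(Jmat n R * Aᵀ * Jmat n R)) *ᵥ y = eV (Sum.inr k) := by
      rw [hy, mulVec_mulVec, hBinv, one_mulVec]
    have h2 : (1:R) = ∑ q, (-(Jmat n R * Aᵀ * Jmat n R)) (Sum.inr k) q * y q := by
      have h3 := congrFun h1 (Sum.inr k)
      rw [eV_apply, if_pos rfl] at h3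
      rw [← h3]
      rfl
    rw [h2]
    refine Ideal.sum_mem _ fun q _ => ?_
    by_cases hq1 : q = Sum.inr k
    · subst hq1
      exact Ideal.mul_mem_left _ _ (Ideal.subset_span (Set.mem_insert _ _))
    · by_cases hq2 : idx q < (k:ℕ)
      · rw [hy0 q hq2, mul_zero]; exact Ideal.zero_mem _
      · refine Ideal.mul_mem_left _ _ (Ideal.subset_span
          (Set.mem_insert_iff.mpr (Or.inr ⟨q, ?_, rfl⟩)))
        rw [Finset.mem_coe, hmemS]
        exact ⟨by omega, hq1⟩
  obtain ⟨t, hts⟩ := shorten hSR2 S y (y (Sum.inr k)) hcard hyspan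
  -- phase 1
  set a₁ : Fin n → R := fun j => if (k:ℕ) < (j:ℕ) then -t (Sum.inr j) else 0 with ha₁
  set b₁ : Fin n → R := fun j => if (k:ℕ) < (j:ℕ) then t (Sum.inl j) else 0 with hb₁
  set c₁ : R := t (Sum.inl k) with hc₁
  have hg₁ : Pgood k a₁ b₁ :=
    ⟨fun j hj => by rw [ha₁]; simp only; rw [if_neg (by omega)],
     fun j hj => by rw [hb₁]; simp only; rw [if_neg (by omega)]⟩
  set y1 := Umat k a₁ b₁ c₁ *ᵥ y with hy1
  have hy1lj : ∀ j : Fin n, j ≠ k → y1 (Sum.inl j) =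
      y (Sum.inl j) + y (Sum.inr k) * b₁ j := by
    intro j hjk
    rw [hy1, Umat_mulVec_apply, eV_apply, if_neg (by simp [hjk]), mul_zero, add_zero, sv_inl]
  have hy1rj : ∀ j : Fin n, y1 (Sum.inr j) =
      y (Sum.inr j) + y (Sum.inr k) * (-(a₁ j)) := by
    intro j
    rw [hy1, Umat_mulVec_apply, eV_apply, if_neg (by simp), mul_zero, add_zero, sv_inr]
  have hy1lk : y1 (Sum.inl k) = y (Sum.inl k) + (rv k a₁ b₁ c₁ ⬝ᵥ y) := by
    rw [hy1, Umat_mulVec_apply, eV_apply, if_pos rfl, mul_one, sv_inl, hg₁.bk, mul_zero,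
      add_zero]
  have hy1rk : y1 (Sum.inr k) = y (Sum.inr k) := by
    rw [hy1rj k, hg₁.ak]; ring
  have hy1low : ∀ p : Idx n, idx p < (k:ℕ) → y1 p = 0 := by
    intro p hp
    rw [hy1, Umat_low_entry k a₁ b₁ c₁ hg₁ hp, hy0 p hp]
  -- the span survives phase 1
  have hspan1 : Ideal.span (y1 '' ↑S : Set R) = ⊤ := by
    rw [eq_top_iff, ← hts]
    apply Ideal.span_le.mpr
    rintro w ⟨p, hp, rfl⟩
    rw [Finset.mem_coe, hmemS] at hp
    simp only [SetLike.mem_coe]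
    obtain ⟨hkp, hpne⟩ := hp
    have hmem_y1 : ∀ q ∈ S, y1 q ∈ Ideal.span (y1 '' ↑S : Set R) :=
      fun q hq => Ideal.subset_span ⟨q, by simpa using hq, rfl⟩
    cases p with
    | inl j =>
      by_cases hjk : j = k
      · rw [hjk]
        -- key cancellation computation
        have hsum_a : ∑ j, a₁ j * y1 (Sum.inl j) =
            (∑ j, a₁ j * y (Sum.inl j)) + (∑ j, a₁ j * b₁ j) * y (Sum.inr k) := by
          rw [Finset.sum_mul, ← Finset.sum_add_distrib]
          refine Finset.sum_congr rfl fun j _ => ?_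
          by_cases hjk : j = k
          · rw [hjk, hg₁.ak]; ring
          · rw [hy1lj j hjk]; ring
        have hsum_b : ∑ j, b₁ j * y1 (Sum.inr j) =
            (∑ j, b₁ j * y (Sum.inr j)) - (∑ j, a₁ j * b₁ j) * y (Sum.inr k) := by
          rw [Finset.sum_mul, ← Finset.sum_sub_distrib]
          refine Finset.sum_congr rfl fun j _ => ?_
          rw [hy1rj j]; ring
        have key : y (Sum.inl k) + t (Sum.inl k) * y (Sum.inr k) =
            y1 (Sum.inl k) - (∑ j, a₁ j * y1 (Sum.inl j)) -
              ∑ j, b₁ j * y1 (Sum.inr j) := by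
          rw [hy1lk, rv_dot, hsum_a, hsum_b, hc₁]; ring
        show y (Sum.inl k) + t (Sum.inl k) * y (Sum.inr k) ∈ _
        rw [key]
        refine sub_mem (sub_mem (hmem_y1 _ ((hmemS _).mpr ⟨le_refl _, by simp⟩)) ?_) ?_
        · refine Ideal.sum_mem _ fun j _ => ?_
          by_cases hkj : (k:ℕ) < (j:ℕ)
          · exact Ideal.mul_mem_left _ _
              (hmem_y1 _ ((hmemS _).mpr ⟨by simp [idx]; omega, by simp⟩))
          · rw [ha₁]; simp only; rw [if_neg hkj, zero_mul]
            exact Ideal.zero_mem _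
        · refine Ideal.sum_mem _ fun j _ => ?_
          by_cases hkj : (k:ℕ) < (j:ℕ)
          · refine Ideal.mul_mem_left _ _
              (hmem_y1 _ ((hmemS _).mpr ⟨by simp [idx]; omega, ?_⟩))
            simp [Fin.ext_iff]; omega
          · rw [hb₁]; simp only; rw [if_neg hkj, zero_mul]
            exact Ideal.zero_mem _
      · have hkj : (k:ℕ) < (j:ℕ) := by
          simp only [idx_inl] at hkp
          rcases lt_or_eq_of_le hkp with h | h
          · exact h
          · exact absurd (Fin.ext h.symm) hjk
        have : y (Sum.inl j) + t (Sum.inl j) * y (Sum.inr k) = y1 (Sum.inl j) := by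
          rw [hy1lj j hjk, hb₁]; simp only; rw [if_pos hkj]; ring
        show y (Sum.inl j) + t (Sum.inl j) * y (Sum.inr k) ∈ _
        rw [this]
        exact hmem_y1 _ ((hmemS _).mpr ⟨hkp, hpne⟩)
    | inr j =>
      have hjk : j ≠ k := fun hh => hpne (by rw [hh])
      have hkj : (k:ℕ) < (j:ℕ) := by
        simp only [idx_inr] at hkp
        rcases lt_or_eq_of_le hkp with h | h
        · exact h
        · exact absurd (Fin.ext h.symm) hjk
      have : y (Sum.inr j) + t (Sum.inr j) * y (Sum.inr k) = y1 (Sum.inr j) := by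
        rw [hy1rj j, ha₁]; simp only; rw [if_pos hkj]; ring
      show y (Sum.inr j) + t (Sum.inr j) * y (Sum.inr k) ∈ _
      rw [this]
      exact hmem_y1 _ ((hmemS _).mpr ⟨hkp, hpne⟩)
  -- phase 2
  have h1z : (1:R) - y (Sum.inr k) ∈ Ideal.span (y1 '' ↑S : Set R) := by
    rw [hspan1]; trivial
  obtain ⟨a₂, b₂, c₂, hg₂, he₂⟩ := span_realize k y1 h1z
  set y2 := Vmat k a₂ b₂ c₂ *ᵥ y1 with hy2
  have hy2rk : y2 (Sum.inr k) = 1 := by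
    rw [hy2, Vmat_mulVec_apply, eV_apply, if_pos rfl, mul_one, rv_inr, hg₂.bk, if_pos rfl,
      zero_add, hy1rk]
    calc y (Sum.inr k) + y1 (Sum.inl k) * c₂ + sv a₂ b₂ ⬝ᵥ y1
        = y (Sum.inr k) + (y1 (Sum.inl k) * c₂ + sv a₂ b₂ ⬝ᵥ y1) := by ring
      _ = y (Sum.inr k) + (1 - y (Sum.inr k)) := by rw [he₂]
      _ = 1 := by ring
  have hy2low : ∀ p : Idx n, idx p < (k:ℕ) → y2 p = 0 := by
    intro p hp
    rw [hy2, Vmat_low_entry k a₂ b₂ c₂ hg₂ hp, hy1low p hp]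
  -- phase 3
  set a₃ : Fin n → R := fun j => if (k:ℕ) < (j:ℕ) then y2 (Sum.inr j) else 0 with ha₃
  set b₃ : Fin n → R := fun j => if (k:ℕ) < (j:ℕ) then -(y2 (Sum.inl j)) else 0 with hb₃
  set c₃ : R := -(y2 (Sum.inl k)) - (∑ j, a₃ j * y2 (Sum.inl j)) -
    ∑ j, b₃ j * y2 (Sum.inr j) with hc₃
  have hg₃ : Pgood k a₃ b₃ :=
    ⟨fun j hj => by rw [ha₃]; simp only; rw [if_neg (by omega)],
     fun j hj => by rw [hb₃]; simp only; rw [if_neg (by omega)]⟩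
  set y3 := Umat k a₃ b₃ c₃ *ᵥ y2 with hy3def
  have hy3 : y3 = eV (Sum.inr k) := by
    funext p
    rw [hy3def, Umat_mulVec_apply, hy2rk, one_mul]
    cases p with
    | inl j =>
      by_cases hjk : j = k
      · rw [hjk]
        rw [eV_apply, if_pos rfl, mul_one, sv_inl, hg₃.bk, add_zero, rv_dot, hy2rk,
          mul_one, eV_apply, if_neg (by simp)]
        rw [hc₃]; ring
      · rw [eV_apply, if_neg (by simp [hjk]), mul_zero, add_zero, sv_inl]
        rw [eV_apply, if_neg (by simp)]
        by_cases hkj : (k:ℕ) < (j:ℕ)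
        · rw [hb₃]; simp only; rw [if_pos hkj]; ring
        · have hlow : (j:ℕ) < (k:ℕ) := by
            have : (j:ℕ) ≠ (k:ℕ) := fun hh => hjk (Fin.ext hh)
            omega
          rw [hy2low (Sum.inl j) (by simpa [idx] using hlow), hb₃]
          simp only; rw [if_neg hkj]; ring
    | inr j =>
      rw [eV_apply, if_neg (by simp), mul_zero, add_zero, sv_inr]
      by_cases hjk : j = k
      · rw [hjk]
        rw [hg₃.ak, eV_apply, if_pos rfl, hy2rk]; ring
      · rw [eV_apply, if_neg (by simp [hjk])]
        by_cases hkj : (k:ℕ) < (j:ℕ)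
        · rw [ha₃]; simp only; rw [if_pos hkj]; ring
        · have hlow : (j:ℕ) < (k:ℕ) := by
            have : (j:ℕ) ≠ (k:ℕ) := fun hh => hjk (Fin.ext hh)
            omega
          rw [hy2low (Sum.inr j) (by simpa [idx] using hlow), ha₃]
          simp only; rw [if_neg hkj]; ring
  -- assemble A3
  set A3 := Umat k a₃ b₃ c₃ * (Vmat k a₂ b₂ c₂ * (Umat k a₁ b₁ c₁ * A)) with hA3
  have hA3symp : IsSymp A3 := by
    rw [hA3]
    exact isSymp_mul (isSymp_Umat k a₃ b₃ c₃ hg₃.ak)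
      (isSymp_mul (isSymp_Vmat k a₂ b₂ c₂ hg₂.ak)
        (isSymp_mul (isSymp_Umat k a₁ b₁ c₁ hg₁.ak) hA))
  have hA3yR : A3 *ᵥ eV (Sum.inr k) = eV (Sum.inr k) := by
    rw [hA3, ← mulVec_mulVec, ← mulVec_mulVec, ← mulVec_mulVec, ← hy, ← hy1, ← hy2, ← hy3def,
      hy3]
  set x3 := A3 *ᵥ eV (Sum.inl k) with hx3
  have hx3lk : x3 (Sum.inl k) = 1 := by
    have hpair := pairing_invariant hA3symp (eV (Sum.inl k)) (eV (Sum.inr k))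
    rw [hA3yR, J_mulVec_eR, ← hx3, dot_eV] at hpair
    rw [hpair, dot_eV, eV_apply, if_pos rfl]
  have hx3low : ∀ p : Idx n, idx p < (k:ℕ) → x3 p = 0 := by
    intro p hp
    have hx0 : (A *ᵥ eV (Sum.inl k)) p = 0 := by
      rw [eV, mulVec_single]
      show A p (Sum.inl k) * 1 = 0
      rw [entry_of_fix_row (hrow p hp) (Sum.inl k), if_neg, zero_mul]
      intro hh; subst hh; simp [idx] at hp
    rw [hx3, hA3, ← mulVec_mulVec, ← mulVec_mulVec, ← mulVec_mulVec,
      Umat_low_entry k a₃ b₃ c₃ hg₃ hp, Vmat_low_entry k a₂ b₂ c₂ hg₂ hp,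
      Umat_low_entry k a₁ b₁ c₁ hg₁ hp, hx0]
  -- phase 4
  set a₄ : Fin n → R := fun j => if (k:ℕ) < (j:ℕ) then -(x3 (Sum.inl j)) else 0 with ha₄
  set b₄ : Fin n → R := fun j => if (k:ℕ) < (j:ℕ) then -(x3 (Sum.inr j)) else 0 with hb₄
  set c₄ : R := -(x3 (Sum.inr k)) - (∑ j, b₄ j * x3 (Sum.inl j)) +
    ∑ j, a₄ j * x3 (Sum.inr j) with hc₄
  have hg₄ : Pgood k a₄ b₄ :=
    ⟨fun j hj => by rw [ha₄]; simp only; rw [if_neg (by omega)],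
     fun j hj => by rw [hb₄]; simp only; rw [if_neg (by omega)]⟩
  set x4 := Vmat k a₄ b₄ c₄ *ᵥ x3 with hx4def
  have hx4 : x4 = eV (Sum.inl k) := by
    funext p
    rw [hx4def, Vmat_mulVec_apply, hx3lk, one_mul]
    cases p with
    | inl j =>
      rw [eV_apply (Sum.inr k), if_neg (by simp), mul_zero, add_zero, rv_inl]
      by_cases hjk : j = k
      · rw [hjk]
        rw [hg₄.ak, eV_apply, if_pos rfl, hx3lk]; ring
      · rw [eV_apply, if_neg (by simp [hjk])]
        by_cases hkj : (k:ℕ) < (j:ℕ)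
        · rw [ha₄]; simp only; rw [if_pos hkj]; ring
        · have hlow : (j:ℕ) < (k:ℕ) := by
            have : (j:ℕ) ≠ (k:ℕ) := fun hh => hjk (Fin.ext hh)
            omega
          rw [hx3low (Sum.inl j) (by simpa [idx] using hlow), ha₄]
          simp only; rw [if_neg hkj]; ring
    | inr j =>
      rw [eV_apply (Sum.inl k) (Sum.inr j), if_neg (by simp)]
      by_cases hjk : j = k
      · rw [hjk]
        rw [eV_apply, if_pos rfl, mul_one, rv_inr, hg₄.bk, if_pos rfl, zero_add, sv_dot]
        rw [hc₄]
        have hsva : ∀ j : Fin n, sv a₄ b₄ (Sum.inl j) = b₄ j := fun j => rfl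
        ring
      · rw [eV_apply, if_neg (by simp [hjk]), mul_zero, add_zero, rv_inr, if_neg hjk,
          add_zero]
        by_cases hkj : (k:ℕ) < (j:ℕ)
        · rw [hb₄]; simp only; rw [if_pos hkj]; ring
        · have hlow : (j:ℕ) < (k:ℕ) := by
            have : (j:ℕ) ≠ (k:ℕ) := fun hh => hjk (Fin.ext hh)
            omega
          rw [hx3low (Sum.inr j) (by simpa [idx] using hlow), hb₄]
          simp only; rw [if_neg hkj]; ring
  have hy4 : Vmat k a₄ b₄ c₄ *ᵥ eV (Sum.inr k) = eV (Sum.inr k) := by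
    rw [Vmat_mulVec, eV_apply, if_neg (by simp), dot_eV, sv_inr, hg₄.ak, neg_zero,
      zero_smul, zero_smul, add_zero, add_zero]
  -- the new matrix
  set A' := Vmat k a₄ b₄ c₄ * A3 with hA'
  have hA'symp : IsSymp A' := by
    rw [hA']
    exact isSymp_mul (isSymp_Vmat k a₄ b₄ c₄ hg₄.ak) hA3symp
  have hfix' : ∀ p : Idx n, idx p < (k:ℕ)+1 → A' *ᵥ eV p = eV p := by
    intro p hp
    by_cases hlow : idx p < (k:ℕ)
    · rw [hA', ← mulVec_mulVec, hA3, ← mulVec_mulVec, ← mulVec_mulVec, ← mulVec_mulVec,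
        hfix p hlow, Umat_fix_low k a₁ b₁ c₁ hg₁ hlow, Vmat_fix_low k a₂ b₂ c₂ hg₂ hlow,
        Umat_fix_low k a₃ b₃ c₃ hg₃ hlow, Vmat_fix_low k a₄ b₄ c₄ hg₄ hlow]
    · have hpk : idx p = (k:ℕ) := by omega
      cases p with
      | inl i =>
        have hik : i = k := Fin.ext (by simpa [idx] using hpk)
        rw [hik, hA', ← mulVec_mulVec, ← hx3, ← hx4def, hx4]
      | inr i =>
        have hik : i = k := Fin.ext (by simpa [idx] using hpk)
        rw [hik, hA', ← mulVec_mulVec, hA3yR, hy4]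
  -- decomposition
  have hdecomp : A = Umat k (-a₁) (-b₁) (-c₁) * (Vmat k (-a₂) (-b₂) (-c₂) *
      (Umat k (-a₃) (-b₃) (-c₃) * (Vmat k (-a₄) (-b₄) (-c₄) * A'))) := by
    have e4 : Vmat k (-a₄) (-b₄) (-c₄) * A' = A3 := by
      rw [hA', ← mul_assoc, Vmat_mul_neg k a₄ b₄ c₄ hg₄.ak, one_mul]
    rw [e4, hA3]
    rw [← mul_assoc (Umat k (-a₃) (-b₃) (-c₃)), Umat_neg_mul k a₃ b₃ c₃ hg₃.ak, one_mul]
    rw [← mul_assoc (Vmat k (-a₂) (-b₂) (-c₂)), Vmat_mul_neg k a₂ b₂ c₂ hg₂.ak, one_mul]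
    rw [← mul_assoc (Umat k (-a₁) (-b₁) (-c₁)), Umat_neg_mul k a₁ b₁ c₁ hg₁.ak, one_mul]
  exact ⟨-a₁, -b₁, -c₁, -a₂, -b₂, -c₂, -a₃, -b₃, -c₃, -a₄, -b₄, -c₄, A',
    hg₁.neg, hg₂.neg, hg₃.neg, hg₄.neg, hA'symp, hfix', hdecomp⟩

end Sp
end Chunk8
section Chunk9
namespace Sp
open Matrix

variable {R : Type*} [CommRing R] {n : ℕ}

lemma swap_assoc {M : Type*} [Monoid M] {x g x' : M} (h : x * g = g * x') (W : M) :
    x * (g * W) = g * (x' * W) := by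
  rw [← mul_assoc, h, mul_assoc]

lemma neg_mem_transpose {M : Matrix (Idx n) (Idx n) R} (hM : M ∈ NegRootElems n R) :
    ∃ N ∈ PosRootElems n R, M = Nᵀ := by
  obtain ⟨t, h1 | h2 | h3⟩ := hM
  · obtain ⟨i, j, hji, rfl⟩ := h1
    refine ⟨1 + t • (Matrix.single (Sum.inl j) (Sum.inl i) 1 -
      Matrix.single (Sum.inr i) (Sum.inr j) 1), ⟨t, Or.inl ⟨j, i, hji, rfl⟩⟩, ?_⟩
    rw [transpose_add, transpose_one, transpose_smul, transpose_sub,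
      stdBasisMatrix_transpose, stdBasisMatrix_transpose]
  · obtain ⟨i, j, hij, rfl⟩ := h2
    refine ⟨1 + t • (Matrix.single (Sum.inl i) (Sum.inr j) 1 +
      Matrix.single (Sum.inl j) (Sum.inr i) 1), ⟨t, Or.inr (Or.inl ⟨i, j, hij, rfl⟩)⟩, ?_⟩
    rw [transpose_add, transpose_one, transpose_smul, transpose_add,
      stdBasisMatrix_transpose, stdBasisMatrix_transpose]
  · obtain ⟨i, rfl⟩ := h3
    refine ⟨1 + t • Matrix.single (Sum.inl i) (Sum.inr i) 1,
      ⟨t, Or.inr (Or.inr ⟨i, rfl⟩)⟩, ?_⟩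
    rw [transpose_add, transpose_one, transpose_smul, stdBasisMatrix_transpose]

lemma pos_isSymp {M : Matrix (Idx n) (Idx n) R} (hM : M ∈ PosRootElems n R) :
    IsSymp M := by
  obtain ⟨t, h1 | h2 | h3⟩ := hM
  · obtain ⟨i, j, hij, rfl⟩ := h1
    rw [← Umat_gen1 i j t]
    have hne : i ≠ j := ne_of_lt hij
    exact isSymp_Umat i _ _ _ (by simp [Pi.single_apply, hne])
  · obtain ⟨i, j, hij, rfl⟩ := h2
    rw [← Umat_gen2 i j t (by intro hh; subst hh; exact lt_irrefl _ hij)]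
    exact isSymp_Umat i _ _ _ (by simp)
  · obtain ⟨i, rfl⟩ := h3
    rw [← Umat_gen3 i t]
    exact isSymp_Umat i _ _ _ (by simp)

lemma root_isSymp {M : Matrix (Idx n) (Idx n) R} (hM : M ∈ RootElems n R) :
    IsSymp M := by
  rcases hM with h | h
  · exact pos_isSymp h
  · obtain ⟨N, hN, rfl⟩ := neg_mem_transpose h
    exact isSymp_transpose (pos_isSymp hN)

lemma closure_isSymp {M : Matrix (Idx n) (Idx n) R}
    (hM : M ∈ Submonoid.closure (RootElems n R)) : IsSymp M := by
  induction hM using Submonoid.closure_induction with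
  | mem x hx => exact root_isSymp hx
  | one => exact isSymp_one
  | mul x y hx hy ihx ihy => exact isSymp_mul ihx ihy

/-- main downward induction -/
lemma dec
    (hSR2 : ∀ v₀ v₁ v₂ : R, Ideal.span {v₀, v₁, v₂} = ⊤ →
      ∃ t₁ t₂ : R, Ideal.span {v₁ + t₁ * v₀, v₂ + t₂ * v₀} = ⊤)
    (hn : 2 ≤ n) :
    ∀ (d kk : ℕ), kk + d = n - 2 →
      ∀ (A : Matrix (Idx n) (Idx n) R), IsSymp A →
      (∀ p : Idx n, idx p < kk → A *ᵥ eV p = eV p) →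
      ∃ u₁ v₁ u₂ v₂ Z : Matrix (Idx n) (Idx n) R,
        (u₁ ∈ Submonoid.closure (PosRootElems n R) ∧ IsSymp u₁ ∧ SuppGe kk u₁) ∧
        (v₁ ∈ Submonoid.closure (NegRootElems n R) ∧ IsSymp v₁ ∧ SuppGe kk v₁) ∧
        (u₂ ∈ Submonoid.closure (PosRootElems n R) ∧ IsSymp u₂ ∧ SuppGe kk u₂) ∧
        (v₂ ∈ Submonoid.closure (NegRootElems n R) ∧ IsSymp v₂ ∧ SuppGe kk v₂) ∧
        (IsSymp Z ∧ ∀ p : Idx n, idx p < n - 2 → Z *ᵥ eV p = eV p) ∧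
        A = u₁ * (v₁ * (u₂ * (v₂ * Z))) := by
  intro d
  induction d with
  | zero =>
    intro kk hkk A hA hfix
    refine ⟨1, 1, 1, 1, A, ⟨Submonoid.one_mem _, isSymp_one, suppGe_one _⟩,
      ⟨Submonoid.one_mem _, isSymp_one, suppGe_one _⟩,
      ⟨Submonoid.one_mem _, isSymp_one, suppGe_one _⟩,
      ⟨Submonoid.one_mem _, isSymp_one, suppGe_one _⟩,
      ⟨hA, fun p hp => hfix p (by omega)⟩, by simp⟩
  | succ d ih =>
    intro kk hkk A hA hfix
    have hkn : kk + 3 ≤ n := by omega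
    set kF : Fin n := ⟨kk, by omega⟩ with hkF
    have hkFv : (kF : ℕ) = kk := rfl
    obtain ⟨a₁, b₁, c₁, a₂, b₂, c₂, a₃, b₃, c₃, a₄, b₄, c₄, A', hg₁, hg₂, hg₃, hg₄,
      hA'symp, hfix', hdecomp⟩ :=
      step hSR2 kF (by omega) hA (by rw [hkFv]; exact hfix)
    obtain ⟨u₁', v₁', u₂', v₂', Z, ⟨hu₁m, hu₁s, hu₁g⟩, ⟨hv₁m, hv₁s, hv₁g⟩,
      ⟨hu₂m, hu₂s, hu₂g⟩, ⟨hv₂m, hv₂s, hv₂g⟩, hZ, hA'eq⟩ :=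
      ih (kk + 1) (by omega) A' hA'symp (by rw [← hkFv]; intro p hp; exact hfix' p hp)
    -- swap moves
    have hsupp_u₁ : SuppGe ((kF:ℕ)+1) u₁' := by rw [hkFv]; exact hu₁g
    have hsupp_v₁ : SuppGe ((kF:ℕ)+1) v₁' := by rw [hkFv]; exact hv₁g
    have hsupp_u₂ : SuppGe ((kF:ℕ)+1) u₂' := by rw [hkFv]; exact hu₂g
    obtain ⟨a₄', b₄', c₄', hg₄', hs1⟩ := Vmat_swap kF hu₁s hsupp_u₁ a₄ b₄ c₄ hg₄
    obtain ⟨a₃', b₃', c₃', hg₃', hs2⟩ := Umat_swap kF hu₁s hsupp_u₁ a₃ b₃ c₃ hg₃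
    obtain ⟨a₂', b₂', c₂', hg₂', hs3⟩ := Vmat_swap kF hu₁s hsupp_u₁ a₂ b₂ c₂ hg₂
    obtain ⟨a₄'', b₄'', c₄'', hg₄'', hs4⟩ := Vmat_swap kF hv₁s hsupp_v₁ a₄' b₄' c₄' hg₄'
    obtain ⟨a₃'', b₃'', c₃'', hg₃'', hs5⟩ := Umat_swap kF hv₁s hsupp_v₁ a₃' b₃' c₃' hg₃'
    obtain ⟨a₄''', b₄''', c₄''', hg₄''', hs6⟩ :=
      Vmat_swap kF hu₂s hsupp_u₂ a₄'' b₄'' c₄'' hg₄''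
    -- rewrite the word
    have hword : A = (Umat kF a₁ b₁ c₁ * u₁') * ((Vmat kF a₂' b₂' c₂' * v₁') *
        ((Umat kF a₃'' b₃'' c₃'' * u₂') * ((Vmat kF a₄''' b₄''' c₄''' * v₂') * Z))) := by
      rw [hdecomp, hA'eq]
      rw [swap_assoc hs1, swap_assoc hs2, swap_assoc hs3, swap_assoc hs4, swap_assoc hs5,
        swap_assoc hs6]
      simp only [mul_assoc]
    refine ⟨Umat kF a₁ b₁ c₁ * u₁', Vmat kF a₂' b₂' c₂' * v₁',
      Umat kF a₃'' b₃'' c₃'' * u₂', Vmat kF a₄''' b₄''' c₄''' * v₂', Z,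
      ⟨Submonoid.mul_mem _ (Umat_mem kF a₁ b₁ c₁ hg₁) hu₁m,
        isSymp_mul (isSymp_Umat kF _ _ _ hg₁.ak) hu₁s,
        suppGe_mul (by rw [← hkFv]; exact suppGe_Umat kF a₁ b₁ c₁ hg₁)
          (suppGe_mono (by omega) hu₁g)⟩,
      ⟨Submonoid.mul_mem _ (Vmat_mem kF a₂' b₂' c₂' hg₂') hv₁m,
        isSymp_mul (isSymp_Vmat kF _ _ _ hg₂'.ak) hv₁s,
        suppGe_mul (by rw [← hkFv]; exact suppGe_Vmat kF a₂' b₂' c₂' hg₂')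
          (suppGe_mono (by omega) hv₁g)⟩,
      ⟨Submonoid.mul_mem _ (Umat_mem kF a₃'' b₃'' c₃'' hg₃'') hu₂m,
        isSymp_mul (isSymp_Umat kF _ _ _ hg₃''.ak) hu₂s,
        suppGe_mul (by rw [← hkFv]; exact suppGe_Umat kF a₃'' b₃'' c₃'' hg₃'')
          (suppGe_mono (by omega) hu₂g)⟩,
      ⟨Submonoid.mul_mem _ (Vmat_mem kF a₄''' b₄''' c₄''' hg₄''') hv₂m,
        isSymp_mul (isSymp_Vmat kF _ _ _ hg₄'''.ak) hv₂s,
        suppGe_mul (by rw [← hkFv]; exact suppGe_Vmat kF a₄''' b₄''' c₄''' hg₄''')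
          (suppGe_mono (by omega) hv₂g)⟩,
      hZ, hword⟩

end Sp
end Chunk9

/-- If `R` has stable range at most `2` and `Sp₄(R)` is generated by root elements, then
`E(C_n,R) = (U⁺(C_n,R)·U⁻(C_n,R))²·Sp₄(R)` with `Sp₄(R)` embedded in the bottom-right
corner blocks. -/
theorem stmt15 {R : Type*} [CommRing R] {n : ℕ} (hn : 2 ≤ n)
    (hSR2 : ∀ v₀ v₁ v₂ : R, Ideal.span {v₀, v₁, v₂} = ⊤ →
      ∃ t₁ t₂ : R, Ideal.span {v₁ + t₁ * v₀, v₂ + t₂ * v₀} = ⊤)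
    (hSp4gen : ∀ M : Matrix (Fin 2 ⊕ Fin 2) (Fin 2 ⊕ Fin 2) R, IsSymp M →
      M ∈ Submonoid.closure (RootElems 2 R)) :
    ∀ A ∈ Submonoid.closure (RootElems n R),
      ∃ u₁ v₁ u₂ v₂ Z : Matrix (Fin n ⊕ Fin n) (Fin n ⊕ Fin n) R,
        u₁ ∈ Submonoid.closure (PosRootElems n R) ∧
        v₁ ∈ Submonoid.closure (NegRootElems n R) ∧
        u₂ ∈ Submonoid.closure (PosRootElems n R) ∧
        v₂ ∈ Submonoid.closure (NegRootElems n R) ∧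
        Z ∈ EmbSp4 n hn R ∧
        A = u₁ * v₁ * u₂ * v₂ * Z := by
  intro A hA
  have hAsymp : IsSymp A := Sp.closure_isSymp hA
  obtain ⟨u₁, v₁, u₂, v₂, Z, ⟨hu₁m, _, _⟩, ⟨hv₁m, _, _⟩, ⟨hu₂m, _, _⟩, ⟨hv₂m, _, _⟩,
    ⟨hZsymp, hZfix⟩, heq⟩ :=
    Sp.dec hSR2 hn (n - 2) 0 (by omega) A hAsymp (fun p hp => absurd hp (by omega))
  refine ⟨u₁, v₁, u₂, v₂, Z, hu₁m, hv₁m, hu₂m, hv₂m, ⟨hZsymp, ?_⟩, by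
    rw [heq]; simp only [mul_assoc]⟩
  intro p q hpq
  have hcorner : ∀ r : Fin n ⊕ Fin n,
      r ∉ ({Sum.inl ⟨n - 2, by omega⟩, Sum.inl ⟨n - 1, by omega⟩,
           Sum.inr ⟨n - 2, by omega⟩, Sum.inr ⟨n - 1, by omega⟩} :
        Set (Fin n ⊕ Fin n)) → Sp.idx r < n - 2 := by
    intro r hr
    simp only [Set.mem_insert_iff, Set.mem_singleton_iff, not_or] at hr
    obtain ⟨h1, h2, h3, h4⟩ := hr
    cases r with
    | inl i =>
      have e1 : i ≠ ⟨n-2, by omega⟩ := fun hh => h1 (by rw [hh])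
      have e2 : i ≠ ⟨n-1, by omega⟩ := fun hh => h2 (by rw [hh])
      have : (i:ℕ) ≠ n - 2 := fun hh => e1 (Fin.ext hh)
      have : (i:ℕ) ≠ n - 1 := fun hh => e2 (Fin.ext hh)
      have := i.isLt
      simp only [Sp.idx_inl]
      omega
    | inr i =>
      have e1 : i ≠ ⟨n-2, by omega⟩ := fun hh => h3 (by rw [hh])
      have e2 : i ≠ ⟨n-1, by omega⟩ := fun hh => h4 (by rw [hh])
      have : (i:ℕ) ≠ n - 2 := fun hh => e1 (Fin.ext hh)
      have : (i:ℕ) ≠ n - 1 := fun hh => e2 (Fin.ext hh)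
      have := i.isLt
      simp only [Sp.idx_inr]
      omega
  rcases hpq with hp | hq
  · -- p is low : use the row
    have hrow := Sp.fix_rows hZsymp hZfix p (hcorner p hp)
    rw [Sp.entry_of_fix_row hrow q, one_apply]
    simp [eq_comm]
  · -- q is low : use the column
    have hcol := hZfix q (hcorner q hq)
    have := congrFun hcol p
    rw [Sp.eV, mulVec_single_one] at this
    simp only [col_apply] at this
    rw [this, one_apply, Pi.single_apply]
end
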